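/- arXiv:quant-ph/0301072 — 4 statements merged into one kernel-verified Lean document; each statement's English description precedes it below -/
import Mathlib

section
/- For any nonzero vector c ∈ ℂ^d with discrete Fourier transform ĉ defined by ĉ_k = (1/√d) Σ_l η^{kl} c_l where η = e^{2πi/d}, the product of the support sizes satisfies |supp(c)| · |supp(ĉ)| ≥ d. -/
open scoped BigOperators Classical ComplexOrder

/-- The primitive `d`-th root of unity `η = e^{2πi/d}`. -/
noncomputable def eta (d : ℕ) : ℂ := Complex.exp (2 * (Real.pi : ℂ) * Complex.I / d)

/-- Discrete Fourier transform: `ĉ_k = (1/√d) Σ_l η^{kl} c_l`. -/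
noncomputable def dft (d : ℕ) (c : Fin d → ℂ) : Fin d → ℂ := fun k =>
  (1 / (Real.sqrt d : ℂ)) * ∑ l : Fin d, eta d ^ ((k : ℕ) * (l : ℕ)) * c l

/-- Number of nonzero components of a vector. -/
noncomputable def suppCard (d : ℕ) (c : Fin d → ℂ) : ℕ :=
  (Finset.univ.filter fun l => c l ≠ 0).card

lemma eta_primitive (d : ℕ) (hd : 0 < d) : IsPrimitiveRoot (eta d) d :=
  Complex.isPrimitiveRoot_exp d hd.ne'

lemma eta_abs (d : ℕ) : ‖eta d‖ = 1 := by
  rw [eta, Complex.norm_exp]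
  have : (2 * (Real.pi : ℂ) * Complex.I / d).re = 0 := by
    simp [Complex.div_re, Complex.mul_re, Complex.mul_im]
  rw [this, Real.exp_zero]

lemma eta_geom (d : ℕ) (hd : 0 < d) (m : ℕ) :
    ∑ k : Fin d, eta d ^ ((k : ℕ) * m) = if d ∣ m then (d : ℂ) else 0 := by
  have hp := eta_primitive d hd
  have hrw : ∀ k : Fin d, eta d ^ ((k : ℕ) * m) = (eta d ^ m) ^ (k : ℕ) := by
    intro k; rw [← pow_mul, Nat.mul_comm]
  simp_rw [hrw]
  rw [Fin.sum_univ_eq_sum_range (fun k => (eta d ^ m) ^ k)]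
  by_cases hdm : d ∣ m
  · rw [if_pos hdm, (hp.pow_eq_one_iff_dvd m).mpr hdm]
    simp
  · rw [if_neg hdm]
    have hne : eta d ^ m ≠ 1 := fun h => hdm ((hp.pow_eq_one_iff_dvd m).mp h)
    rw [geom_sum_eq hne, ← pow_mul, Nat.mul_comm, pow_mul, hp.pow_eq_one]
    simp

theorem support_uncertainty (d : ℕ) (c : Fin d → ℂ) (hc : c ≠ 0) :
    d ≤ suppCard d c * suppCard d (dft d c) := by
  classical
  rcases Nat.eq_zero_or_pos d with h0 | hd
  · exfalso; apply hc; subst h0; funext l; exact l.elim0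
  set A : Finset (Fin d) := Finset.univ.filter (fun l => c l ≠ 0) with hA
  set B : Finset (Fin d) := Finset.univ.filter (fun k => dft d c k ≠ 0) with hB
  -- choose j maximizing |c j|
  obtain ⟨j, -, hj⟩ := Finset.exists_max_image Finset.univ (fun l => ‖c l‖)
    (Finset.univ_nonempty_iff.mpr ⟨⟨0, hd⟩⟩)
  have hcj : c j ≠ 0 := by
    obtain ⟨l, hl⟩ : ∃ l, c l ≠ 0 := by
      by_contra h; push_neg at h; exact hc (funext h)
    intro h
    have := hj l (Finset.mem_univ l)
    rw [h, norm_zero] at this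
    exact hl (norm_eq_zero.mp (le_antisymm this (norm_nonneg _)))
  have hsq : (Real.sqrt d : ℝ) > 0 := Real.sqrt_pos.mpr (by exact_mod_cast hd)
  have hsqC : (Real.sqrt d : ℂ) ≠ 0 := by exact_mod_cast hsq.ne'
  -- Fourier inversion at j
  have hinv : (Real.sqrt d : ℂ) * c j
      = ∑ k : Fin d, eta d ^ ((k : ℕ) * (d - (j : ℕ))) * dft d c k := by
    have : ∀ k : Fin d, eta d ^ ((k : ℕ) * (d - (j : ℕ))) * dft d c k
        = (1 / (Real.sqrt d : ℂ)) *
          ∑ l : Fin d, eta d ^ ((k : ℕ) * ((d - (j : ℕ)) + (l : ℕ))) * c l := by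
      intro k
      rw [dft]
      simp only [Finset.mul_sum]
      refine Finset.sum_congr rfl fun l _ => ?_
      rw [Nat.mul_add, pow_add]; ring
    simp_rw [this]
    rw [← Finset.mul_sum, Finset.sum_comm]
    have hswap : ∀ l : Fin d,
        ∑ k : Fin d, eta d ^ ((k : ℕ) * ((d - (j : ℕ)) + (l : ℕ))) * c l
          = (if d ∣ ((d - (j : ℕ)) + (l : ℕ)) then (d : ℂ) else 0) * c l := by
      intro l; rw [← Finset.sum_mul, eta_geom d hd]
    simp_rw [hswap]
    have hdvd : ∀ l : Fin d, d ∣ ((d - (j : ℕ)) + (l : ℕ)) ↔ l = j := by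
      have hj' : (j : ℕ) < d := j.isLt
      intro l
      have hl' : (l : ℕ) < d := l.isLt
      constructor
      · intro h
        have h1 : 0 < (d - (j : ℕ)) + (l : ℕ) := by omega
        have h2 : (d - (j : ℕ)) + (l : ℕ) < 2 * d := by omega
        have hle := Nat.le_of_dvd h1 h
        have hdvd' : d ∣ ((d - (j : ℕ)) + (l : ℕ) - d) := Nat.dvd_sub h dvd_rfl
        rcases Nat.eq_zero_or_pos ((d - (j : ℕ)) + (l : ℕ) - d) with h' | h'
        · exact Fin.ext (by omega)
        · have := Nat.le_of_dvd h' hdvd'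
          exact Fin.ext (by omega)
      · rintro rfl
        exact ⟨1, by omega⟩
    rw [Finset.sum_eq_single j]
    · rw [if_pos ((hdvd j).mpr rfl)]
      have hss : ((Real.sqrt d : ℝ) : ℂ) * ((Real.sqrt d : ℝ) : ℂ) = (d : ℂ) := by
        rw [← Complex.ofReal_mul, Real.mul_self_sqrt (by positivity)]
        norm_cast
      field_simp
      linear_combination hss
    · intro l _ hlj
      rw [if_neg (fun h => hlj ((hdvd l).mp h)), zero_mul]
    · intro h; exact absurd (Finset.mem_univ j) h
  -- bound |dft c k| for every k
  have hdftbound : ∀ k : Fin d,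
      ‖dft d c k‖ ≤ (1 / Real.sqrt d) * A.card * ‖c j‖ := by
    intro k
    rw [dft, norm_mul]
    have h1 : ‖1 / (Real.sqrt d : ℂ)‖ = 1 / Real.sqrt d := by
      rw [norm_div, norm_one, Complex.norm_real, Real.norm_eq_abs, abs_of_pos hsq]
    rw [h1, mul_assoc]
    apply mul_le_mul_of_nonneg_left _ (by positivity)
    have hsub : ∑ l : Fin d, eta d ^ ((k : ℕ) * (l : ℕ)) * c l
        = ∑ l ∈ A, eta d ^ ((k : ℕ) * (l : ℕ)) * c l := by
      symm
      apply Finset.sum_subset (Finset.filter_subset _ _)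
      intro l _ hl
      have : c l = 0 := by
        by_contra h; exact hl (Finset.mem_filter.mpr ⟨Finset.mem_univ l, h⟩)
      rw [this, mul_zero]
    rw [hsub]
    calc ‖∑ l ∈ A, eta d ^ ((k : ℕ) * (l : ℕ)) * c l‖
        ≤ ∑ l ∈ A, ‖eta d ^ ((k : ℕ) * (l : ℕ)) * c l‖ :=
          norm_sum_le _ _
      _ ≤ ∑ l ∈ A, ‖c j‖ := by
          apply Finset.sum_le_sum
          intro l _
          rw [norm_mul, norm_pow, eta_abs, one_pow, one_mul]
          exact hj l (Finset.mem_univ l)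
      _ = A.card * ‖c j‖ := by rw [Finset.sum_const, nsmul_eq_mul]
  -- main estimate
  have hmain : Real.sqrt d * ‖c j‖
      ≤ B.card * ((1 / Real.sqrt d) * A.card * ‖c j‖) := by
    have h1 : Real.sqrt d * ‖c j‖
        = ‖∑ k ∈ B, eta d ^ ((k : ℕ) * (d - (j : ℕ))) * dft d c k‖ := by
      have hsub : ∑ k : Fin d, eta d ^ ((k : ℕ) * (d - (j : ℕ))) * dft d c k
          = ∑ k ∈ B, eta d ^ ((k : ℕ) * (d - (j : ℕ))) * dft d c k := by
        symm
        apply Finset.sum_subset (Finset.filter_subset _ _)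
        intro k _ hk
        have : dft d c k = 0 := by
          by_contra h; exact hk (Finset.mem_filter.mpr ⟨Finset.mem_univ k, h⟩)
        rw [this, mul_zero]
      rw [← hsub, ← hinv, norm_mul, Complex.norm_real, Real.norm_eq_abs, abs_of_pos hsq]
    rw [h1]
    calc ‖∑ k ∈ B, eta d ^ ((k : ℕ) * (d - (j : ℕ))) * dft d c k‖
        ≤ ∑ k ∈ B, ‖eta d ^ ((k : ℕ) * (d - (j : ℕ))) * dft d c k‖ :=
          norm_sum_le _ _
      _ ≤ ∑ k ∈ B, (1 / Real.sqrt d) * A.card * ‖c j‖ := by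
          apply Finset.sum_le_sum
          intro k _
          rw [norm_mul, norm_pow, eta_abs, one_pow, one_mul]
          exact hdftbound k
      _ = B.card * ((1 / Real.sqrt d) * A.card * ‖c j‖) := by
          rw [Finset.sum_const, nsmul_eq_mul]
  have hcjpos : 0 < ‖c j‖ := norm_pos_iff.mpr hcj
  have hfin : (d : ℝ) ≤ (A.card : ℝ) * B.card := by
    have h2 : Real.sqrt d ≤ (B.card : ℝ) * ((1 / Real.sqrt d) * A.card) := by
      have := hmain
      rw [mul_assoc] at this
      exact le_of_mul_le_mul_right (by nlinarith [hmain]) hcjpos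
    have h3 : Real.sqrt d * Real.sqrt d ≤ (B.card : ℝ) * A.card := by
      have := mul_le_mul_of_nonneg_right h2 hsq.le
      calc Real.sqrt d * Real.sqrt d
          ≤ (B.card : ℝ) * ((1 / Real.sqrt d) * A.card) * Real.sqrt d := by
            nlinarith
        _ = (B.card : ℝ) * A.card := by field_simp
    rw [Real.mul_self_sqrt (by positivity)] at h3
    linarith
  have : (d : ℝ) ≤ ((A.card * B.card : ℕ) : ℝ) := by push_cast; exact hfin
  exact_mod_cast this
end

section
/- If a unit vector c ∈ ℂ^d satisfies S({|c_l|²}) + S({|ĉ_k|²}) = log d, then all nonzero components c_l have equal modulus and all nonzero components ĉ_k have equal modulus, and |supp(c)| · |supp(ĉ)| = d. -/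
open scoped BigOperators Classical ComplexOrder

/-- Shannon entropy of a probability vector. -/
noncomputable def shannonEntropy (d : ℕ) (p : Fin d → ℝ) : ℝ :=
  -∑ i, p i * Real.log (p i)

section Rigidity
open Complex

/-- Boundary Schwarz / Hopf-type rigidity: an entire function with nonnegative real part on
the strip `0 ≤ re ≤ 1`, vanishing to second order at `0`, vanishes at `1`. -/
lemma boundary_rigidity (ψ : ℂ → ℂ) (hψ : Differentiable ℂ ψ)
    (h0 : ψ 0 = 0) (h1 : deriv ψ 0 = 0)
    (hre : ∀ z : ℂ, 0 ≤ z.re → z.re ≤ 1 → 0 ≤ (ψ z).re) : ψ 1 = 0 := by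
  by_cases hev : ∀ᶠ z in nhds (0:ℂ), ψ z = 0
  · -- identity theorem
    have hA : AnalyticOnNhd ℂ ψ Set.univ := fun z _ => hψ.analyticAt z
    have := hA.eqOn_zero_of_preconnected_of_eventuallyEq_zero isPreconnected_univ
      (Set.mem_univ (0:ℂ)) hev
    simpa using this (Set.mem_univ (1:ℂ))
  · exfalso
    have hA0 : AnalyticAt ℂ ψ 0 := hψ.analyticAt 0
    have hord : analyticOrderAt ψ 0 ≠ ⊤ := by
      intro h; exact hev (analyticOrderAt_eq_top.mp h)
    obtain ⟨n, hn⟩ : ∃ n : ℕ, analyticOrderAt ψ 0 = n := by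
      obtain ⟨n, hn⟩ := WithTop.ne_top_iff_exists.mp hord
      exact ⟨n, hn.symm⟩
    obtain ⟨g, hg, hg0, hrep⟩ := hA0.analyticOrderAt_eq_natCast.mp hn
    -- n ≥ 2
    have hn0 : n ≠ 0 := by
      rintro rfl
      have : ψ 0 = g 0 := by
        have := hrep.self_of_nhds; simpa using this
      exact hg0 (by rw [← this, h0])
    have hn1 : n ≠ 1 := by
      rintro rfl
      -- deriv ψ 0 = g 0
      have hd : deriv ψ 0 = g 0 := by
        have heq : deriv ψ 0 = deriv (fun z : ℂ => (z - 0) ^ 1 • g z) 0 := by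
          apply Filter.EventuallyEq.deriv_eq
          exact hrep
        rw [heq]
        have hg' : DifferentiableAt ℂ g 0 := hg.differentiableAt
        have H : HasDerivAt (fun z : ℂ => (z - 0) ^ 1 • g z) (g 0) 0 := by
          simpa [Pi.mul_def] using ((hasDerivAt_id (0:ℂ)).sub_const 0).pow 1 |>.smul (hg'.hasDerivAt)
        exact H.deriv
      exact hg0 (by rw [← hd, h1])
    have hn2 : 2 ≤ n := by omega
    -- choose a direction θ with |θ| ≤ π/2 such that exp(i n θ) * g 0 = -|g 0|
    set a : ℂ := g 0 with ha
    have habs : 0 < ‖a‖ := by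
      simpa using hg0
    have hπ := Real.pi_pos
    have hnR : (2:ℝ) ≤ (n:ℝ) := by exact_mod_cast hn2
    have hnpos : (0:ℝ) < n := by linarith
    set θ : ℝ := if 0 ≤ a.arg then (Real.pi - a.arg)/n else (-Real.pi - a.arg)/n with hθ
    have harg1 : a.arg ≤ Real.pi := Complex.arg_le_pi a
    have harg2 : -Real.pi < a.arg := Complex.neg_pi_lt_arg a
    have hθmem : θ ∈ Set.Icc (-(Real.pi/2)) (Real.pi/2) := by
      rw [hθ]
      constructor
      · split_ifs with h
        · have : (0:ℝ) ≤ (Real.pi - a.arg)/n := by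
            apply div_nonneg _ hnpos.le; linarith
          linarith
        · rw [le_div_iff₀ hnpos]; push_neg at h; nlinarith
      · split_ifs with h
        · rw [div_le_iff₀ hnpos]; nlinarith
        · have : (-Real.pi - a.arg)/n ≤ 0 := by
            apply div_nonpos_of_nonpos_of_nonneg _ hnpos.le; push_neg at h; linarith
          linarith
    have hkey : Complex.exp ((n*θ : ℝ)*I) * a = -(‖a‖ : ℂ) := by
      have hrw : a = (‖a‖ : ℂ) * Complex.exp (a.arg * I) :=
        (Complex.norm_mul_exp_arg_mul_I a).symm
      rw [hrw, ← mul_assoc, mul_comm (Complex.exp _) ((‖a‖ : ℂ)), mul_assoc,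
        ← Complex.exp_add]
      have : ((n*θ : ℝ):ℂ)*I + a.arg*I = (((n*θ : ℝ) + a.arg : ℝ):ℂ)*I := by push_cast; ring
      rw [this]
      rw [hθ]; split_ifs with h
      · have : (n:ℝ) * ((Real.pi - a.arg)/n) + a.arg = Real.pi := by field_simp; ring
        rw [this]
        simp [Complex.exp_pi_mul_I]
      · have : (n:ℝ) * ((-Real.pi - a.arg)/n) + a.arg = -Real.pi := by field_simp; ring
        rw [this]
        have : ((-Real.pi : ℝ):ℂ) * I = -(Real.pi * I) := by push_cast; ring
        rw [this, Complex.exp_neg, Complex.exp_pi_mul_I]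
        norm_num
    -- get radius for the representation and continuity
    obtain ⟨δ₁, hδ₁, hball⟩ := Metric.eventually_nhds_iff.mp hrep
    obtain ⟨δ₂, hδ₂, hcont⟩ := Metric.continuousAt_iff.mp hg.continuousAt (‖a‖ / 2)
      (half_pos habs)
    set ε : ℝ := min δ₁ (min δ₂ 1) / 2 with hε
    have hεpos : 0 < ε := by positivity
    have hεδ₁ : ε < δ₁ := by
      have := min_le_left δ₁ (min δ₂ 1); simp only [hε]; linarith
    have hεδ₂ : ε < δ₂ := by
      have h1 := min_le_right δ₁ (min δ₂ 1); have h2 := min_le_left δ₂ (1:ℝ)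
      simp only [hε]; linarith
    have hε1 : ε ≤ 1 := by
      have h1 := min_le_right δ₁ (min δ₂ 1); have h2 := min_le_right δ₂ (1:ℝ)
      simp only [hε]; linarith
    set z : ℂ := (ε:ℝ) * Complex.exp ((θ:ℝ) * I) with hz
    have hzabs : ‖z‖ = ε := by
      rw [hz]
      rw [norm_mul, Complex.norm_exp_ofReal_mul_I]
      simp [abs_of_pos hεpos]
    have hzdist : dist z 0 < δ₁ := by
      rw [Complex.dist_eq, sub_zero, hzabs]; exact hεδ₁
    have hψz : ψ z = z^n * g z := by
      have := hball hzdist; simpa [smul_eq_mul] using this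
    have hgz : ‖g z - a‖ < ‖a‖ / 2 := by
      have : dist z 0 < δ₂ := by rw [Complex.dist_eq, sub_zero, hzabs]; exact hεδ₂
      have := hcont this
      rwa [Complex.dist_eq] at this
    -- compute re
    have hzn : z^n = ((ε^n : ℝ):ℂ) * Complex.exp ((n*θ : ℝ)*I) := by
      rw [hz, mul_pow, ← Complex.exp_nat_mul]
      push_cast
      ring_nf
    have hrew : ψ z = ((ε^n : ℝ):ℂ) * (Complex.exp ((n*θ : ℝ)*I) * g z) := by
      rw [hψz, hzn]; ring
    have hw : (Complex.exp ((n*θ : ℝ)*I) * g z).re < 0 := by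
      have hsplit : Complex.exp ((n*θ : ℝ)*I) * g z
          = -(‖a‖ : ℂ) + Complex.exp ((n*θ : ℝ)*I) * (g z - a) := by
        rw [← hkey]; ring
      rw [hsplit]
      have hb : ‖Complex.exp ((n*θ : ℝ)*I) * (g z - a)‖ < ‖a‖ / 2 := by
        rw [norm_mul, Complex.norm_exp_ofReal_mul_I, one_mul]; exact hgz
      have := Complex.abs_re_le_norm (Complex.exp ((n*θ : ℝ)*I) * (g z - a))
      have h2 : (Complex.exp ((n*θ : ℝ)*I) * (g z - a)).re < ‖a‖ / 2 :=
        lt_of_le_of_lt (le_trans (le_abs_self _) this) hb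
      simp only [Complex.add_re, Complex.neg_re, Complex.ofReal_re]
      linarith
    have hψre : (ψ z).re < 0 := by
      rw [hrew, Complex.re_ofReal_mul]
      have : (0:ℝ) < ε^n := by positivity
      exact mul_neg_of_pos_of_neg this hw
    have hzre0 : 0 ≤ z.re := by
      rw [hz]
      simp only [Complex.re_ofReal_mul, Complex.exp_ofReal_mul_I_re]
      exact mul_nonneg hεpos.le (Real.cos_nonneg_of_mem_Icc hθmem)
    have hzre1 : z.re ≤ 1 := by
      rw [hz]
      simp only [Complex.re_ofReal_mul, Complex.exp_ofReal_mul_I_re]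
      calc ε * Real.cos θ ≤ ε * 1 := by
            exact mul_le_mul_of_nonneg_left (Real.cos_le_one θ) hεpos.le
        _ ≤ 1 := by linarith
    exact absurd (hre z hzre0 hzre1) (not_le.mpr hψre)

end Rigidity

lemma conj_mul_self : ∀ z : ℂ, (starRingEnd ℂ) z * z = ((‖z‖^2 : ℝ) : ℂ) := by
  intro z
  rw [mul_comm, Complex.mul_conj, Complex.normSq_eq_norm_sq]

lemma orth_pairing (d : ℕ) (g : Fin d → Fin d → ℂ)
    (horth : ∀ a b : Fin d, ∑ k, (starRingEnd ℂ) (g k a) * g k b = if a = b then 1 else 0) :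
    ∀ x y : Fin d → ℂ,
      ∑ k, (starRingEnd ℂ) (∑ l, g k l * x l) * (∑ l, g k l * y l)
        = ∑ l, (starRingEnd ℂ) (x l) * y l := by
  intro x y
  calc ∑ k, (starRingEnd ℂ) (∑ l, g k l * x l) * (∑ l, g k l * y l)
      = ∑ k, ∑ l, ∑ m, ((starRingEnd ℂ) (x l) * y m) * ((starRingEnd ℂ) (g k l) * g k m) := by
        apply Finset.sum_congr rfl; intro k _
        rw [map_sum, Finset.sum_mul_sum]
        apply Finset.sum_congr rfl; intro l _
        apply Finset.sum_congr rfl; intro m _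
        rw [map_mul]; ring
    _ = ∑ l, ∑ m, ((starRingEnd ℂ) (x l) * y m) * (∑ k, (starRingEnd ℂ) (g k l) * g k m) := by
        rw [Finset.sum_comm]
        apply Finset.sum_congr rfl; intro l _
        rw [Finset.sum_comm]
        apply Finset.sum_congr rfl; intro m _
        rw [Finset.mul_sum]
    _ = ∑ l, (starRingEnd ℂ) (x l) * y l := by
        apply Finset.sum_congr rfl; intro l _
        simp only [horth]
        simp [Finset.sum_ite_eq, mul_ite]

lemma orth_parseval (d : ℕ) (g : Fin d → Fin d → ℂ)
    (horth : ∀ a b : Fin d, ∑ k, (starRingEnd ℂ) (g k a) * g k b = if a = b then 1 else 0) :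
    ∀ x : Fin d → ℂ, ∑ k, ‖∑ l, g k l * x l‖^2 = ∑ l, ‖x l‖^2 := by
  intro x
  have h := orth_pairing d g horth x x
  simp only [conj_mul_self] at h
  rw [← Complex.ofReal_sum, ← Complex.ofReal_sum] at h
  exact_mod_cast h

/-- Column/row orthonormality of the normalized DFT matrix. -/
lemma dft_orth (d : ℕ) (hd : d ≠ 0) (a b : Fin d) :
    ∑ k : Fin d, (starRingEnd ℂ) ((1 / (Real.sqrt d : ℂ)) * eta d ^ ((k : ℕ) * (a : ℕ)))
      * ((1 / (Real.sqrt d : ℂ)) * eta d ^ ((k : ℕ) * (b : ℕ)))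
      = if a = b then 1 else 0 := by
  have hprim : IsPrimitiveRoot (eta d) d := by
    simpa [eta] using Complex.isPrimitiveRoot_exp d hd
  have hη0 : eta d ≠ 0 := Complex.exp_ne_zero _
  have hdpos : (0:ℝ) < d := by
    have := Nat.pos_of_ne_zero hd; exact_mod_cast this
  have hsqr : Real.sqrt d ≠ 0 := by
    rw [Real.sqrt_ne_zero']; exact hdpos
  have hsq : (Real.sqrt d : ℂ) ≠ 0 := Complex.ofReal_ne_zero.mpr hsqr
  have hconj : (starRingEnd ℂ) (eta d) = (eta d)⁻¹ := by
    rw [eta, ← Complex.exp_conj, ← Complex.exp_neg]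
    congr 1
    simp only [map_div₀, map_mul, Complex.conj_I, map_ofNat, Complex.conj_ofReal]
    push_cast
    simp [map_natCast]
    ring
  have hconjr : (starRingEnd ℂ) ((Real.sqrt d : ℂ)) = (Real.sqrt d : ℂ) := Complex.conj_ofReal _
  -- rewrite each summand
  have hterm : ∀ k : Fin d,
      (starRingEnd ℂ) ((1 / (Real.sqrt d : ℂ)) * eta d ^ ((k : ℕ) * (a : ℕ)))
        * ((1 / (Real.sqrt d : ℂ)) * eta d ^ ((k : ℕ) * (b : ℕ)))
      = (1 / (d:ℂ)) * (eta d ^ (((b:ℤ) - (a:ℤ)))) ^ (k:ℕ) := by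
    intro k
    have h1 : (starRingEnd ℂ) (eta d ^ ((k : ℕ) * (a : ℕ))) = (eta d)⁻¹ ^ ((k : ℕ) * (a : ℕ)) := by
      rw [map_pow, hconj]
    rw [map_mul, h1]
    have h2 : (eta d)⁻¹ ^ ((k : ℕ) * (a : ℕ)) * eta d ^ ((k : ℕ) * (b : ℕ))
        = eta d ^ ((k:ℤ) * ((b:ℤ) - (a:ℤ))) := by
      rw [← zpow_natCast (eta d)⁻¹, ← zpow_natCast (eta d), inv_zpow, ← zpow_neg,
        ← zpow_add₀ hη0]
      congr 1
      push_cast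
      ring
    have h3 : eta d ^ ((k:ℤ) * ((b:ℤ) - (a:ℤ))) = (eta d ^ (((b:ℤ) - (a:ℤ)))) ^ (k:ℕ) := by
      rw [← zpow_natCast (eta d ^ (((b:ℤ) - (a:ℤ))))]
      rw [← zpow_mul]
      congr 1
      ring
    have h4 : (starRingEnd ℂ) (1 / (Real.sqrt d : ℂ)) * (1 / (Real.sqrt d : ℂ)) = 1/(d:ℂ) := by
      rw [map_div₀, map_one, hconjr]
      rw [div_mul_div_comm, one_mul]
      congr 1
      rw [← Complex.ofReal_mul, Real.mul_self_sqrt hdpos.le]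
      norm_cast
    calc (starRingEnd ℂ) (1 / (Real.sqrt d : ℂ)) * (eta d)⁻¹ ^ ((k : ℕ) * (a : ℕ))
          * ((1 / (Real.sqrt d : ℂ)) * eta d ^ ((k : ℕ) * (b : ℕ)))
        = ((starRingEnd ℂ) (1 / (Real.sqrt d : ℂ)) * (1 / (Real.sqrt d : ℂ)))
          * ((eta d)⁻¹ ^ ((k : ℕ) * (a : ℕ)) * eta d ^ ((k : ℕ) * (b : ℕ))) := by ring
      _ = (1 / (d:ℂ)) * (eta d ^ (((b:ℤ) - (a:ℤ)))) ^ (k:ℕ) := by rw [h4, h2, h3]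
  simp only [hterm]
  rw [← Finset.mul_sum]
  set ω : ℂ := eta d ^ (((b:ℤ) - (a:ℤ))) with hω
  rcases eq_or_ne a b with rfl | hab
  · rw [if_pos rfl]
    have hω1 : ω = 1 := by rw [hω]; simp
    rw [hω1]
    have hdC : (d:ℂ) ≠ 0 := Nat.cast_ne_zero.mpr hd
    simp only [one_pow, Finset.sum_const, Finset.card_univ, Fintype.card_fin, nsmul_eq_mul,
      mul_one]
    field_simp
  · have hω1 : ω ≠ 1 := by
      rw [hω]
      intro hcon
      have := (hprim.zpow_eq_one_iff_dvd _).mp hcon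
      have hlt : |(b:ℤ) - (a:ℤ)| < d := by
        have hb := b.isLt; have ha := a.isLt
        rw [abs_lt]; omega
      have := Int.eq_zero_of_abs_lt_dvd this hlt
      have : (a:ℤ) = (b:ℤ) := by omega
      exact hab (Fin.ext (by exact_mod_cast this))
    have hωd : ω ^ d = 1 := by
      rw [hω, ← zpow_natCast, ← zpow_mul, mul_comm, zpow_mul]
      rw [zpow_natCast, hprim.pow_eq_one, one_zpow]
    have : ∑ k : Fin d, ω ^ (k:ℕ) = 0 := by
      rw [Fin.sum_univ_eq_sum_range (fun i => ω ^ i), geom_sum_eq hω1, hωd]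
      simp
    rw [this, if_neg hab, mul_zero]

/-- Main lemma: for a unitary matrix with flat small entries, entropy equality forces the
transform to have constant modulus `‖c‖₁/√d` on its support. -/
lemma main_flat (d : ℕ) (hd : d ≠ 0) (g : Fin d → Fin d → ℂ)
    (hgle : ∀ k l, ‖g k l‖ ≤ 1 / Real.sqrt d)
    (horth : ∀ a b : Fin d, ∑ k, (starRingEnd ℂ) (g k a) * g k b = if a = b then 1 else 0)
    (c : Fin d → ℂ) (hc : ∑ l, ‖c l‖ ^ 2 = 1)
    (hent : shannonEntropy d (fun l => ‖c l‖ ^ 2)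
      + shannonEntropy d (fun k => ‖∑ l, g k l * c l‖ ^ 2) = Real.log d) :
    ∀ k : Fin d, (∑ l, g k l * c l) ≠ 0 →
      ‖∑ l, g k l * c l‖ = (∑ l, ‖c l‖) / Real.sqrt d := by
  have hdpos : (0:ℝ) < d := by
    have := Nat.pos_of_ne_zero hd; exact_mod_cast this
  have hsd : (0:ℝ) < Real.sqrt d := Real.sqrt_pos.mpr hdpos
  set F : Fin d → ℂ := fun k => ∑ l, g k l * c l with hF
  have hPar := orth_pairing d g horth
  have hconjmul := conj_mul_self
  have hparnorm := orth_parseval d g horth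
  have hF1 : ∑ k, ‖F k‖^2 = 1 := by
    rw [hF]; rw [hparnorm c]; exact hc
  -- data for Φ
  set D : ℝ := Real.log d / 2 with hD
  set L : Fin d → ℝ := fun k => Real.log ‖F k‖ with hL
  set M : Fin d → ℝ := fun l => Real.log ‖c l‖ with hM
  set A : Fin d → Fin d → ℂ := fun k l => (starRingEnd ℂ) (F k) * (g k l * c l) with hA
  set B : Fin d → Fin d → ℝ := fun k l => D + L k + M l with hB
  set Φ : ℂ → ℂ := fun z => ∑ k, ∑ l, A k l * Complex.exp (z * ((B k l : ℝ) : ℂ)) with hΦ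
  have hA0 : ∑ k, ∑ l, A k l = 1 := by
    have h1 : ∀ k, ∑ l, A k l = ((‖F k‖^2 : ℝ) : ℂ) := by
      intro k
      rw [hA]
      simp only
      rw [← Finset.mul_sum, ← hconjmul (F k)]
    simp only [h1]
    rw [← Complex.ofReal_sum, hF1, Complex.ofReal_one]
  have hAB : ∑ k, ∑ l, A k l * ((B k l : ℝ) : ℂ) = 0 := by
    have hsplitB : ∀ k l, A k l * ((B k l : ℝ) : ℂ)
        = A k l * ((D:ℝ):ℂ) + A k l * ((L k:ℝ):ℂ) + A k l * ((M l:ℝ):ℂ) := by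
      intro k l
      rw [hB]
      push_cast
      ring
    simp only [hsplitB, Finset.sum_add_distrib]
    -- term 1
    have hT1 : ∑ k, ∑ l, A k l * ((D:ℝ):ℂ) = ((D:ℝ):ℂ) := by
      have : ∀ k, ∑ l, A k l * ((D:ℝ):ℂ) = (∑ l, A k l) * ((D:ℝ):ℂ) := by
        intro k; rw [Finset.sum_mul]
      simp only [this]
      rw [← Finset.sum_mul, hA0, one_mul]
    -- term 2
    have hT2 : ∑ k, ∑ l, A k l * ((L k:ℝ):ℂ) = ((∑ k, ‖F k‖^2 * L k : ℝ) : ℂ) := by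
      rw [Complex.ofReal_sum]
      apply Finset.sum_congr rfl; intro k _
      rw [← Finset.sum_mul]
      have h1 : ∑ l, A k l = ((‖F k‖^2 : ℝ) : ℂ) := by
        rw [hA]; simp only
        rw [← Finset.mul_sum, ← hconjmul (F k)]
      rw [h1]
      push_cast
      ring
    -- term 3
    have hT3 : ∑ k, ∑ l, A k l * ((M l:ℝ):ℂ) = ((∑ l, ‖c l‖^2 * M l : ℝ) : ℂ) := by
      have h1 : ∀ k, ∑ l, A k l * ((M l:ℝ):ℂ)
          = (starRingEnd ℂ) (∑ l, g k l * c l) * (∑ l, g k l * (c l * ((M l:ℝ):ℂ))) := by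
        intro k
        rw [Finset.mul_sum, hA]
        apply Finset.sum_congr rfl; intro l _
        simp only [hF]
        ring
      simp only [h1]
      rw [hPar c (fun l => c l * ((M l:ℝ):ℂ))]
      rw [Complex.ofReal_sum]
      apply Finset.sum_congr rfl; intro l _
      rw [← mul_assoc, hconjmul (c l)]
      push_cast
      ring
    rw [hT1, hT2, hT3]
    -- now reduce to real identity from hent
    have hq : ∑ k, ‖F k‖^2 * L k = -(shannonEntropy d (fun k => ‖F k‖^2)) / 2 := by
      rw [shannonEntropy]
      have : ∀ k, ‖F k‖^2 * Real.log (‖F k‖^2) = 2 * (‖F k‖^2 * L k) := by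
        intro k
        rw [hL]
        simp only
        rw [Real.log_pow]
        push_cast
        ring
      simp only [this]
      rw [← Finset.mul_sum]
      ring
    have hp : ∑ l, ‖c l‖^2 * M l = -(shannonEntropy d (fun l => ‖c l‖^2)) / 2 := by
      rw [shannonEntropy]
      have : ∀ l, ‖c l‖^2 * Real.log (‖c l‖^2) = 2 * (‖c l‖^2 * M l) := by
        intro l
        rw [hM]
        simp only
        rw [Real.log_pow]
        push_cast
        ring
      simp only [this]
      rw [← Finset.mul_sum]
      ring
    rw [hq, hp, hD]
    rw [← Complex.ofReal_add, ← Complex.ofReal_add]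
    rw [show Real.log d / 2 + -(shannonEntropy d fun k => ‖F k‖^2) / 2
        + -(shannonEntropy d fun l => ‖c l‖^2) / 2
      = (Real.log d - (shannonEntropy d (fun l => ‖c l‖^2)
        + shannonEntropy d (fun k => ‖F k‖^2))) / 2 by ring]
    rw [hF] at *
    rw [← hent]
    simp
  have hΦdiff : Differentiable ℂ Φ := by
    apply Differentiable.fun_sum; intro k _
    apply Differentiable.fun_sum; intro l _
    exact ((differentiable_id.mul_const ((B k l : ℝ) : ℂ)).cexp).const_mul (A k l)
  have hΦ0 : Φ 0 = 1 := by
    rw [hΦ]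
    simp only [zero_mul, Complex.exp_zero, mul_one]
    exact hA0
  have hΦd : deriv Φ 0 = 0 := by
    have hHas : HasDerivAt Φ (∑ k, ∑ l, A k l * ((B k l : ℝ) : ℂ)) 0 := by
      rw [hΦ]
      apply HasDerivAt.fun_sum; intro k _
      apply HasDerivAt.fun_sum; intro l _
      have h1 : HasDerivAt (fun z : ℂ => z * ((B k l : ℝ) : ℂ)) ((B k l : ℝ) : ℂ) 0 := by
        simpa using (hasDerivAt_id (0:ℂ)).mul_const ((B k l : ℝ) : ℂ)
      have h2 := h1.cexp
      have h3 := h2.const_mul (A k l)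
      simpa using h3
    rw [hHas.deriv]; exact hAB
  have hsplit : ∀ z : ℂ, Φ z = Complex.exp (z * ((D:ℝ):ℂ)) *
      ∑ k, ((starRingEnd ℂ) (F k) * Complex.exp (z * ((L k : ℝ):ℂ)))
        * ∑ l, g k l * (c l * Complex.exp (z * ((M l : ℝ):ℂ))) := by
    intro z
    rw [hΦ]
    simp only
    rw [Finset.mul_sum]
    apply Finset.sum_congr rfl; intro k _
    rw [Finset.mul_sum, Finset.mul_sum]
    apply Finset.sum_congr rfl; intro l _
    rw [hA, hB]
    simp only
    have : ((( D + L k + M l : ℝ)) : ℂ) = ((D:ℝ):ℂ) + ((L k:ℝ):ℂ) + ((M l:ℝ):ℂ) := by push_cast; ring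
    rw [this, mul_add, mul_add, Complex.exp_add, Complex.exp_add]
    ring
  have hexpnorm : ∀ (z:ℂ) (r:ℝ), ‖Complex.exp (z * (r:ℂ))‖ = Real.exp (z.re * r) := by
    intro z r
    rw [Complex.norm_exp]
    congr 1
    simp [Complex.mul_re]
  have key1 : ∀ x : ℂ, ‖x‖ * Real.exp (Real.log ‖x‖) = ‖x‖^2 := by
    intro x
    rcases eq_or_ne x 0 with rfl | hx
    · simp
    · rw [Real.exp_log (norm_pos_iff.mpr hx)]; ring
  have hb0 : ∀ z:ℂ, z.re = 0 → ‖Φ z‖ ≤ 1 := by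
    intro z hz
    rw [hsplit z]
    set u : Fin d → ℂ := fun l => c l * Complex.exp (z * ((M l : ℝ):ℂ)) with hu
    set v : Fin d → ℂ := fun k => ∑ l, g k l * u l with hv
    have hunorm : ∀ l, ‖u l‖ = ‖c l‖ := by
      intro l
      rw [hu]; simp only
      rw [norm_mul, hexpnorm, hz, zero_mul, Real.exp_zero, mul_one]
    have hvnorm : ∑ k, ‖v k‖^2 = 1 := by
      rw [hv]
      simp only
      rw [hparnorm u]
      calc ∑ l, ‖u l‖^2 = ∑ l, ‖c l‖^2 := by
            apply Finset.sum_congr rfl; intro l _; rw [hunorm]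
        _ = 1 := hc
    rw [norm_mul, hexpnorm, hz, zero_mul, Real.exp_zero, one_mul]
    calc ‖∑ k, ((starRingEnd ℂ) (F k) * Complex.exp (z * ((L k : ℝ):ℂ))) * v k‖
        ≤ ∑ k, ‖((starRingEnd ℂ) (F k) * Complex.exp (z * ((L k : ℝ):ℂ))) * v k‖ :=
          norm_sum_le _ _
      _ = ∑ k, ‖F k‖ * ‖v k‖ := by
          apply Finset.sum_congr rfl; intro k _
          rw [norm_mul, norm_mul, hexpnorm, hz, zero_mul, Real.exp_zero, mul_one,
            RCLike.norm_conj]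
      _ ≤ 1 := by
          have hcs := Finset.sum_mul_sq_le_sq_mul_sq Finset.univ (fun k => ‖F k‖)
            (fun k => ‖v k‖)
          simp only [hF1, hvnorm, one_mul] at hcs
          have hnn : (0:ℝ) ≤ ∑ k, ‖F k‖ * ‖v k‖ :=
            Finset.sum_nonneg fun k _ => mul_nonneg (norm_nonneg _) (norm_nonneg _)
          nlinarith
  have hb1 : ∀ z:ℂ, z.re = 1 → ‖Φ z‖ ≤ 1 := by
    intro z hz
    rw [hsplit z]
    set u : Fin d → ℂ := fun l => c l * Complex.exp (z * ((M l : ℝ):ℂ)) with hu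
    set v : Fin d → ℂ := fun k => ∑ l, g k l * u l with hv
    have hunorm : ∀ l, ‖u l‖ = ‖c l‖^2 := by
      intro l
      rw [hu]; simp only
      rw [norm_mul, hexpnorm, hz, one_mul, hM]
      exact key1 (c l)
    have hvle : ∀ k, ‖v k‖ ≤ (Real.sqrt d)⁻¹ := by
      intro k
      rw [hv]; simp only
      calc ‖∑ l, g k l * u l‖ ≤ ∑ l, ‖g k l * u l‖ := norm_sum_le _ _
        _ ≤ ∑ l, (Real.sqrt d)⁻¹ * ‖c l‖^2 := by
            apply Finset.sum_le_sum; intro l _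
            rw [norm_mul, hunorm]
            apply mul_le_mul_of_nonneg_right _ (sq_nonneg _)
            rw [← one_div]
            exact hgle k l
        _ = (Real.sqrt d)⁻¹ := by rw [← Finset.mul_sum, hc, mul_one]
    rw [norm_mul, hexpnorm, hz, one_mul, hD]
    have hexpD : Real.exp (Real.log (d:ℝ) / 2) = Real.sqrt d := by
      rw [← Real.log_sqrt hdpos.le, Real.exp_log hsd]
    rw [hexpD]
    calc Real.sqrt d * ‖∑ k, ((starRingEnd ℂ) (F k) * Complex.exp (z * ((L k : ℝ):ℂ))) * v k‖
        ≤ Real.sqrt d * ∑ k, ‖F k‖^2 * ‖v k‖ := by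
          apply mul_le_mul_of_nonneg_left _ hsd.le
          calc ‖∑ k, ((starRingEnd ℂ) (F k) * Complex.exp (z * ((L k : ℝ):ℂ))) * v k‖
              ≤ ∑ k, ‖((starRingEnd ℂ) (F k) * Complex.exp (z * ((L k : ℝ):ℂ))) * v k‖ :=
                norm_sum_le _ _
            _ = ∑ k, ‖F k‖^2 * ‖v k‖ := by
                apply Finset.sum_congr rfl; intro k _
                rw [norm_mul, norm_mul, hexpnorm, hz, one_mul, RCLike.norm_conj, hL]
                rw [key1 (F k)]
      _ ≤ Real.sqrt d * ((Real.sqrt d)⁻¹ * 1) := by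
          apply mul_le_mul_of_nonneg_left _ hsd.le
          calc ∑ k, ‖F k‖^2 * ‖v k‖ ≤ ∑ k, ‖F k‖^2 * (Real.sqrt d)⁻¹ := by
                apply Finset.sum_le_sum; intro k _
                exact mul_le_mul_of_nonneg_left (hvle k) (sq_nonneg _)
            _ = (Real.sqrt d)⁻¹ * 1 := by rw [← Finset.sum_mul, hF1, one_mul, mul_one]
      _ = 1 := by field_simp
  have hPL : ∀ z:ℂ, 0 ≤ z.re → z.re ≤ 1 → ‖Φ z‖ ≤ 1 := by
    have hC : ∀ z:ℂ, 0 ≤ z.re → z.re ≤ 1 →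
        ‖Φ z‖ ≤ ∑ k, ∑ l, ‖A k l‖ * Real.exp |B k l| := by
      intro z h0 h1
      rw [hΦ]
      calc ‖∑ k, ∑ l, A k l * Complex.exp (z * ((B k l : ℝ):ℂ))‖
          ≤ ∑ k, ‖∑ l, A k l * Complex.exp (z * ((B k l : ℝ):ℂ))‖ := norm_sum_le _ _
        _ ≤ ∑ k, ∑ l, ‖A k l * Complex.exp (z * ((B k l : ℝ):ℂ))‖ := by
            apply Finset.sum_le_sum; intro k _; exact norm_sum_le _ _
        _ ≤ ∑ k, ∑ l, ‖A k l‖ * Real.exp |B k l| := by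
            apply Finset.sum_le_sum; intro k _
            apply Finset.sum_le_sum; intro l _
            rw [norm_mul, hexpnorm]
            apply mul_le_mul_of_nonneg_left _ (norm_nonneg _)
            apply Real.exp_le_exp.mpr
            rcases le_or_gt 0 (B k l) with hBp | hBn
            · calc z.re * B k l ≤ 1 * B k l := mul_le_mul_of_nonneg_right h1 hBp
                _ ≤ |B k l| := by rw [one_mul]; exact le_abs_self _
            · calc z.re * B k l ≤ 0 := mul_nonpos_of_nonneg_of_nonpos h0 hBn.le
                _ ≤ |B k l| := abs_nonneg _
    intro z h0 h1
    apply PhragmenLindelof.vertical_strip (a := 0) (b := 1)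
      (hΦdiff.diffContOnCl) ?_ hb0 hb1 h0 h1
    refine ⟨1, by rw [sub_zero, div_one]; nlinarith [Real.pi_gt_three], 0, ?_⟩
    apply Asymptotics.IsBigO.of_bound (∑ k, ∑ l, ‖A k l‖ * Real.exp |B k l|)
    rw [Filter.eventually_inf_principal]
    apply Filter.Eventually.of_forall
    intro w hw
    simp only [Set.mem_preimage, Set.mem_Ioo] at hw
    have hb := hC w hw.1.le hw.2.le
    simp only [zero_mul, Real.exp_zero, norm_one, mul_one]
    exact hb
  have hΦ1 : Φ 1 = 1 := by
    have hψ := boundary_rigidity (fun z => 1 - Φ z)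
      ((differentiable_const 1).sub hΦdiff)
      (by simp [hΦ0]) ?_ ?_
    · have : (1:ℂ) - Φ 1 = 0 := hψ
      linear_combination -this
    · rw [deriv_const_sub, hΦd, neg_zero]
    · intro z h0 h1
      have h2 := hPL z h0 h1
      have h3 : (Φ z).re ≤ 1 := le_trans (Complex.re_le_norm _) h2
      simp only [Complex.sub_re, Complex.one_re]
      linarith
  -- extraction at z = 1
  intro k0 hk0
  show ‖F k0‖ = (∑ l, ‖c l‖) / Real.sqrt d
  set u : Fin d → ℂ := fun l => c l * Complex.exp ((1:ℂ) * ((M l : ℝ):ℂ)) with hu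
  set v : Fin d → ℂ := fun k => ∑ l, g k l * u l with hv
  have hre1 : (1:ℂ).re = 1 := Complex.one_re
  have hunorm : ∀ l, ‖u l‖ = ‖c l‖^2 := by
    intro l; rw [hu]; simp only
    rw [norm_mul, hexpnorm, hre1, one_mul, hM]; exact key1 (c l)
  have hueq : ∀ l, u l = c l * ((‖c l‖:ℝ):ℂ) := by
    intro l
    rcases eq_or_ne (c l) 0 with h | h
    · rw [hu]; simp only [h]; simp
    · rw [hu]; simp only
      congr 1
      rw [one_mul, hM]
      simp only
      rw [← Complex.ofReal_exp, Real.exp_log (norm_pos_iff.mpr h)]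
  have hterm_le : ∀ k l, ‖g k l * u l‖ ≤ (Real.sqrt d)⁻¹ * ‖c l‖^2 := by
    intro k l; rw [norm_mul, hunorm]
    apply mul_le_mul_of_nonneg_right _ (sq_nonneg _)
    rw [← one_div]; exact hgle k l
  have hvle : ∀ k, ‖v k‖ ≤ (Real.sqrt d)⁻¹ := by
    intro k; rw [hv]; simp only
    calc ‖∑ l, g k l * u l‖ ≤ ∑ l, ‖g k l * u l‖ := norm_sum_le _ _
      _ ≤ ∑ l, (Real.sqrt d)⁻¹ * ‖c l‖^2 := Finset.sum_le_sum (fun l _ => hterm_le k l)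
      _ = (Real.sqrt d)⁻¹ := by rw [← Finset.mul_sum, hc, mul_one]
  set w : Fin d → ℂ :=
    fun k => ((starRingEnd ℂ) (F k) * Complex.exp ((1:ℂ) * ((L k : ℝ):ℂ))) * v k with hw
  have hwnorm : ∀ k, ‖w k‖ = ‖F k‖^2 * ‖v k‖ := by
    intro k; rw [hw]; simp only
    rw [norm_mul, norm_mul, hexpnorm, hre1, one_mul, RCLike.norm_conj, hL]
    simp only
    rw [key1 (F k)]
  have hEq1 : Complex.exp ((1:ℂ) * ((D:ℝ):ℂ)) * ∑ k, w k = 1 := by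
    have h := hsplit 1
    rw [hΦ1] at h
    exact h.symm
  have hsumw : ∑ k, w k = (((Real.sqrt d)⁻¹ : ℝ) : ℂ) := by
    have hexpD : Complex.exp ((1:ℂ) * ((D:ℝ):ℂ)) = ((Real.sqrt d : ℝ):ℂ) := by
      rw [one_mul, ← Complex.ofReal_exp, hD]
      congr 1
      rw [← Real.log_sqrt hdpos.le, Real.exp_log hsd]
    rw [hexpD] at hEq1
    have h2 := eq_inv_of_mul_eq_one_left ((mul_comm _ _).trans hEq1)
    rw [h2, Complex.ofReal_inv]
  have hre_sum : ∑ k, (w k).re = (Real.sqrt d)⁻¹ := by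
    have h := congrArg Complex.re hsumw
    rwa [Complex.re_sum, Complex.ofReal_re] at h
  have hwre_le : ∀ k, (w k).re ≤ ‖F k‖^2 * (Real.sqrt d)⁻¹ := by
    intro k
    have h1 := Complex.re_le_norm (w k)
    calc (w k).re ≤ ‖w k‖ := h1
      _ = ‖F k‖^2 * ‖v k‖ := hwnorm k
      _ ≤ ‖F k‖^2 * (Real.sqrt d)⁻¹ := mul_le_mul_of_nonneg_left (hvle k) (sq_nonneg _)
  have heach : ∀ k, (w k).re = ‖F k‖^2 * (Real.sqrt d)⁻¹ := by
    have hzero : ∑ k, (‖F k‖^2 * (Real.sqrt d)⁻¹ - (w k).re) = 0 := by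
      rw [Finset.sum_sub_distrib, ← Finset.sum_mul, hF1, one_mul, hre_sum, sub_self]
    intro k
    have h := (Finset.sum_eq_zero_iff_of_nonneg
      (fun k _ => sub_nonneg.mpr (hwre_le k))).mp hzero k (Finset.mem_univ k)
    linarith
  have hFpos : 0 < ‖F k0‖ := norm_pos_iff.mpr hk0
  have hvk0 : ‖v k0‖ = (Real.sqrt d)⁻¹ := by
    have h1 := Complex.re_le_norm (w k0)
    rw [hwnorm k0] at h1
    have h2 := heach k0
    have hF2 : 0 < ‖F k0‖^2 := by positivity
    have h3 : (Real.sqrt d)⁻¹ ≤ ‖v k0‖ := by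
      have : ‖F k0‖^2 * (Real.sqrt d)⁻¹ ≤ ‖F k0‖^2 * ‖v k0‖ := by rw [← h2]; exact h1
      exact le_of_mul_le_mul_left this hF2
    exact le_antisymm (hvle k0) h3
  have hterm_sum : ∑ l, ‖g k0 l * u l‖ = (Real.sqrt d)⁻¹ := by
    apply le_antisymm
    · calc ∑ l, ‖g k0 l * u l‖ ≤ ∑ l, (Real.sqrt d)⁻¹ * ‖c l‖^2 :=
          Finset.sum_le_sum (fun l _ => hterm_le k0 l)
        _ = (Real.sqrt d)⁻¹ := by rw [← Finset.mul_sum, hc, mul_one]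
    · calc (Real.sqrt d)⁻¹ = ‖v k0‖ := hvk0.symm
        _ ≤ ∑ l, ‖g k0 l * u l‖ := by rw [hv]; exact norm_sum_le _ _
  have hterm_each : ∀ l, ‖g k0 l * u l‖ = (Real.sqrt d)⁻¹ * ‖c l‖^2 := by
    have hzero : ∑ l, ((Real.sqrt d)⁻¹ * ‖c l‖^2 - ‖g k0 l * u l‖) = 0 := by
      rw [Finset.sum_sub_distrib, ← Finset.mul_sum, hc, mul_one, hterm_sum, sub_self]
    intro l
    have h := (Finset.sum_eq_zero_iff_of_nonneg
      (fun l _ => sub_nonneg.mpr (hterm_le k0 l))).mp hzero l (Finset.mem_univ l)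
    linarith
  have halign_le : ∀ l, ((starRingEnd ℂ) (v k0) * (g k0 l * u l)).re
      ≤ ‖v k0‖ * ‖g k0 l * u l‖ := by
    intro l
    have h := Complex.re_le_norm ((starRingEnd ℂ) (v k0) * (g k0 l * u l))
    rw [norm_mul, RCLike.norm_conj] at h
    exact h
  have halign_sum : ∑ l, ((starRingEnd ℂ) (v k0) * (g k0 l * u l)).re = ‖v k0‖^2 := by
    have h1 : ∑ l, (starRingEnd ℂ) (v k0) * (g k0 l * u l) = ((‖v k0‖^2:ℝ):ℂ) := by
      rw [← Finset.mul_sum]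
      rw [show ∑ l, g k0 l * u l = v k0 from by rw [hv]]
      exact hconjmul (v k0)
    have h := congrArg Complex.re h1
    rwa [Complex.re_sum, Complex.ofReal_re] at h
  have halign_rhs : ∑ l, ‖v k0‖ * ‖g k0 l * u l‖ = ‖v k0‖^2 := by
    rw [← Finset.mul_sum, hterm_sum, hvk0]; ring
  have halign : ∀ l, ((starRingEnd ℂ) (v k0) * (g k0 l * u l))
      = ((‖v k0‖ * ‖g k0 l * u l‖ : ℝ):ℂ) := by
    have hzero : ∑ l, (‖v k0‖ * ‖g k0 l * u l‖
        - ((starRingEnd ℂ) (v k0) * (g k0 l * u l)).re) = 0 := by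
      rw [Finset.sum_sub_distrib, halign_rhs, halign_sum, sub_self]
    intro l
    have hre_eq : ((starRingEnd ℂ) (v k0) * (g k0 l * u l)).re
        = ‖v k0‖ * ‖g k0 l * u l‖ := by
      have h := (Finset.sum_eq_zero_iff_of_nonneg
        (fun l _ => sub_nonneg.mpr (halign_le l))).mp hzero l (Finset.mem_univ l)
      linarith
    set ζ := (starRingEnd ℂ) (v k0) * (g k0 l * u l) with hζ
    have hζn : ‖ζ‖ = ‖v k0‖ * ‖g k0 l * u l‖ := by
      rw [hζ, norm_mul, RCLike.norm_conj]
    have h2 : ‖ζ‖^2 = ζ.re^2 + ζ.im^2 := by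
      rw [Complex.sq_norm, Complex.normSq_apply]; ring
    have him : ζ.im = 0 := by
      rw [hζn, ← hre_eq] at h2
      nlinarith [sq_nonneg ζ.im]
    apply Complex.ext
    · rw [hre_eq]; rw [Complex.ofReal_re]
    · rw [him]; rw [Complex.ofReal_im]
  have hcast : ((Real.sqrt d:ℝ):ℂ) * (((Real.sqrt d)⁻¹:ℝ):ℂ) = 1 := by
    rw [← Complex.ofReal_mul, mul_inv_cancel₀ hsd.ne', Complex.ofReal_one]
  have hterm_eq : ∀ l, g k0 l * u l = ((‖c l‖^2:ℝ):ℂ) * v k0 := by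
    intro l
    have h1 := halign l
    rw [hvk0, hterm_each l] at h1
    have h2 := congrArg (fun t => v k0 * t) h1
    rw [← mul_assoc, Complex.mul_conj] at h2
    have hns : Complex.normSq (v k0) = (Real.sqrt d)⁻¹ * (Real.sqrt d)⁻¹ := by
      rw [← Complex.sq_norm, hvk0]; ring
    rw [hns] at h2
    calc g k0 l * u l
        = (((Real.sqrt d:ℝ):ℂ) * (((Real.sqrt d)⁻¹:ℝ):ℂ))
          * ((((Real.sqrt d):ℝ):ℂ) * (((Real.sqrt d)⁻¹:ℝ):ℂ)) * (g k0 l * u l) := by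
          rw [hcast]; ring
      _ = ((Real.sqrt d:ℝ):ℂ) * ((Real.sqrt d:ℝ):ℂ)
          * ((((Real.sqrt d)⁻¹ * (Real.sqrt d)⁻¹ : ℝ):ℂ) * (g k0 l * u l)) := by
          push_cast; ring
      _ = ((Real.sqrt d:ℝ):ℂ) * ((Real.sqrt d:ℝ):ℂ)
          * (v k0 * ((((Real.sqrt d)⁻¹ * ((Real.sqrt d)⁻¹ * ‖c l‖^2) : ℝ)):ℂ)) := by
          rw [h2]
      _ = ((‖c l‖^2:ℝ):ℂ) * v k0
          * (((Real.sqrt d:ℝ):ℂ) * (((Real.sqrt d)⁻¹:ℝ):ℂ)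
            * (((Real.sqrt d:ℝ):ℂ) * (((Real.sqrt d)⁻¹:ℝ):ℂ))) := by
          push_cast; ring
      _ = ((‖c l‖^2:ℝ):ℂ) * v k0 := by rw [hcast]; ring
  have hc_eq : ∀ l, g k0 l * c l = ((‖c l‖:ℝ):ℂ) * v k0 := by
    intro l
    rcases eq_or_ne (c l) 0 with h | h
    · rw [h, norm_zero]; simp
    · have h1 := hterm_eq l
      rw [hueq l] at h1
      have hcn : ((‖c l‖:ℝ):ℂ) ≠ 0 := by
        rw [Complex.ofReal_ne_zero]
        exact norm_ne_zero_iff.mpr h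
      apply mul_right_cancel₀ hcn
      calc g k0 l * c l * ((‖c l‖:ℝ):ℂ) = g k0 l * (c l * ((‖c l‖:ℝ):ℂ)) := by ring
        _ = ((‖c l‖^2:ℝ):ℂ) * v k0 := h1
        _ = ((‖c l‖:ℝ):ℂ) * v k0 * ((‖c l‖:ℝ):ℂ) := by push_cast; ring
  have hFk0 : F k0 = ((∑ l, ‖c l‖ : ℝ):ℂ) * v k0 := by
    calc F k0 = ∑ l, g k0 l * c l := rfl
      _ = ∑ l, ((‖c l‖:ℝ):ℂ) * v k0 := Finset.sum_congr rfl (fun l _ => hc_eq l)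
      _ = ((∑ l, ‖c l‖ : ℝ):ℂ) * v k0 := by
          rw [← Finset.sum_mul, Complex.ofReal_sum]
  rw [hFk0, norm_mul, hvk0, Complex.norm_real]
  rw [Real.norm_eq_abs, abs_of_nonneg (Finset.sum_nonneg fun l _ => norm_nonneg _)]
  rw [div_eq_mul_inv]

theorem entropic_uncertainty_equality (d : ℕ) (c : Fin d → ℂ)
    (hc : ∑ l, ‖c l‖ ^ 2 = 1)
    (heq : shannonEntropy d (fun l => ‖c l‖ ^ 2)
      + shannonEntropy d (fun k => ‖dft d c k‖ ^ 2) = Real.log d) :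
    (∀ l l' : Fin d, c l ≠ 0 → c l' ≠ 0 → ‖c l‖ = ‖c l'‖) ∧
    (∀ k k' : Fin d, dft d c k ≠ 0 → dft d c k' ≠ 0 → ‖dft d c k‖ = ‖dft d c k'‖) ∧
    suppCard d c * suppCard d (dft d c) = d := by
  rcases eq_or_ne d 0 with rfl | hd
  · exfalso
    rw [Finset.univ_eq_empty, Finset.sum_empty] at hc
    norm_num at hc
  have hdpos : (0:ℝ) < d := by
    have := Nat.pos_of_ne_zero hd; exact_mod_cast this
  have hsd : (0:ℝ) < Real.sqrt d := Real.sqrt_pos.mpr hdpos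
  set g : Fin d → Fin d → ℂ :=
    fun k l => (1 / (Real.sqrt d : ℂ)) * eta d ^ ((k:ℕ) * (l:ℕ)) with hg
  have hdft : ∀ k, dft d c k = ∑ l, g k l * c l := by
    intro k
    rw [dft, Finset.mul_sum]
    apply Finset.sum_congr rfl; intro l _
    rw [hg]; ring
  have hetaeq : eta d = Complex.exp ((((2*Real.pi/d : ℝ)):ℂ) * Complex.I) := by
    rw [eta]
    congr 1
    push_cast
    field_simp
  have hgle : ∀ k l, ‖g k l‖ ≤ 1 / Real.sqrt d := by
    intro k l
    rw [hg]
    simp only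
    rw [norm_mul, norm_pow]
    have h1 : ‖eta d‖ = 1 := by
      rw [hetaeq, Complex.norm_exp_ofReal_mul_I]
    rw [h1, one_pow, mul_one, norm_div, norm_one, Complex.norm_real,
      Real.norm_eq_abs, abs_of_pos hsd]
  have horth1 : ∀ a b : Fin d, ∑ k, (starRingEnd ℂ) (g k a) * g k b
      = if a = b then 1 else 0 := fun a b => dft_orth d hd a b
  have hgsym : ∀ k l, g k l = g l k := by
    intro k l; rw [hg]; simp only [Nat.mul_comm]
  -- instance 1: conclusions about dft c
  have hml1 := main_flat d hd g hgle horth1 c hc (by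
    have : (fun k => ‖dft d c k‖ ^ 2) = (fun k => ‖∑ l, g k l * c l‖ ^ 2) := by
      funext k; rw [hdft k]
    rw [← this]; exact heq)
  have hml1' : ∀ k, dft d c k ≠ 0 → ‖dft d c k‖ = (∑ l, ‖c l‖) / Real.sqrt d := by
    intro k hk
    rw [hdft k] at hk ⊢
    exact hml1 k hk
  -- instance 2: adjoint matrix
  set h : Fin d → Fin d → ℂ := fun l k => (starRingEnd ℂ) (g k l) with hh
  have hhle : ∀ l k, ‖h l k‖ ≤ 1 / Real.sqrt d := by
    intro l k; rw [hh]; simp only [RCLike.norm_conj]; exact hgle k l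
  have horth2 : ∀ a b : Fin d, ∑ l, (starRingEnd ℂ) (h l a) * h l b
      = if a = b then 1 else 0 := by
    intro a b
    have h1 : ∀ l, (starRingEnd ℂ) (h l a) * h l b
        = (starRingEnd ℂ) ((starRingEnd ℂ) (g l a) * g l b) := by
      intro l
      rw [hh]; simp only [map_mul, Complex.conj_conj]
      rw [hgsym a l, hgsym b l]
    calc ∑ l, (starRingEnd ℂ) (h l a) * h l b
        = (starRingEnd ℂ) (∑ l, (starRingEnd ℂ) (g l a) * g l b) := by
          rw [map_sum]; exact Finset.sum_congr rfl fun l _ => h1 l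
      _ = if a = b then 1 else 0 := by
          rw [horth1 a b, apply_ite (starRingEnd ℂ), map_one, map_zero]
  have htrans : ∀ l, ∑ k, h l k * dft d c k = c l := by
    intro l
    calc ∑ k, h l k * dft d c k = ∑ k, ∑ m, c m * ((starRingEnd ℂ) (g k l) * g k m) := by
          apply Finset.sum_congr rfl; intro k _
          rw [hdft k, hh]; simp only
          rw [Finset.mul_sum]
          apply Finset.sum_congr rfl; intro m _; ring
      _ = ∑ m, c m * (∑ k, (starRingEnd ℂ) (g k l) * g k m) := by
          rw [Finset.sum_comm]
          apply Finset.sum_congr rfl; intro m _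
          rw [Finset.mul_sum]
      _ = c l := by
          simp only [horth1]
          simp [Finset.sum_ite_eq, mul_ite]
  have hcF : ∑ k, ‖dft d c k‖ ^ 2 = 1 := by
    have h1 : ∑ k, ‖dft d c k‖ ^ 2 = ∑ k, ‖∑ l, g k l * c l‖ ^ 2 := by
      apply Finset.sum_congr rfl; intro k _; rw [hdft k]
    rw [h1, orth_parseval d g horth1 c, hc]
  have hml2 := main_flat d hd h hhle horth2 (fun k => dft d c k) hcF (by
    have h1 : (fun l => ‖∑ k, h l k * dft d c k‖ ^ 2) = (fun l => ‖c l‖ ^ 2) := by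
      funext l; rw [htrans l]
    rw [h1]
    linarith [heq])
  have hml2' : ∀ l, c l ≠ 0 → ‖c l‖ = (∑ k, ‖dft d c k‖) / Real.sqrt d := by
    intro l hl
    have := hml2 l (by rw [htrans l]; exact hl)
    rwa [htrans l] at this
  refine ⟨?_, ?_, ?_⟩
  · intro l l' h1 h2; rw [hml2' l h1, hml2' l' h2]
  · intro k k' h1 h2; rw [hml1' k h1, hml1' k' h2]
  -- counting
  set μ : ℝ := (∑ k, ‖dft d c k‖) / Real.sqrt d with hμ
  set ν : ℝ := (∑ l, ‖c l‖) / Real.sqrt d with hν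
  set T : Finset (Fin d) := Finset.univ.filter (fun l => c l ≠ 0) with hT
  set Ω : Finset (Fin d) := Finset.univ.filter (fun k => dft d c k ≠ 0) with hΩ
  have hsum_c2 : ∑ l, ‖c l‖^2 = T.card * μ^2 := by
    rw [← Finset.sum_subset (Finset.filter_subset (fun l => c l ≠ 0) Finset.univ)
      (by intro x _ hx
          simp only [hT, Finset.mem_filter, Finset.mem_univ, true_and, not_not] at hx
          rw [hx]; simp)]
    rw [Finset.sum_congr rfl (fun l hl => by
      rw [hml2' l (by simpa [hT, Finset.mem_filter] using hl)])]
    rw [Finset.sum_const, nsmul_eq_mul]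
  have hsum_c1 : ∑ l, ‖c l‖ = T.card * μ := by
    rw [← Finset.sum_subset (Finset.filter_subset (fun l => c l ≠ 0) Finset.univ)
      (by intro x _ hx
          simp only [hT, Finset.mem_filter, Finset.mem_univ, true_and, not_not] at hx
          rw [hx]; simp)]
    rw [Finset.sum_congr rfl (fun l hl => by
      rw [hml2' l (by simpa [hT, Finset.mem_filter] using hl)])]
    rw [Finset.sum_const, nsmul_eq_mul]
  have hsum_F2 : ∑ k, ‖dft d c k‖^2 = Ω.card * ν^2 := by
    rw [← Finset.sum_subset (Finset.filter_subset (fun k => dft d c k ≠ 0) Finset.univ)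
      (by intro x _ hx
          simp only [hΩ, Finset.mem_filter, Finset.mem_univ, true_and, not_not] at hx
          rw [hx]; simp)]
    rw [Finset.sum_congr rfl (fun k hk => by
      rw [hml1' k (by simpa [hΩ, Finset.mem_filter] using hk)])]
    rw [Finset.sum_const, nsmul_eq_mul]
  have hsum_F1 : ∑ k, ‖dft d c k‖ = Ω.card * ν := by
    rw [← Finset.sum_subset (Finset.filter_subset (fun k => dft d c k ≠ 0) Finset.univ)
      (by intro x _ hx
          simp only [hΩ, Finset.mem_filter, Finset.mem_univ, true_and, not_not] at hx
          rw [hx]; simp)]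
    rw [Finset.sum_congr rfl (fun k hk => by
      rw [hml1' k (by simpa [hΩ, Finset.mem_filter] using hk)])]
    rw [Finset.sum_const, nsmul_eq_mul]
  have h1 : (T.card : ℝ) * μ^2 = 1 := by rw [← hsum_c2]; exact hc
  have h2 : (Ω.card : ℝ) * ν^2 = 1 := by rw [← hsum_F2]; exact hcF
  have hμ0 : 0 < μ := by
    rcases lt_or_ge 0 μ with h | h
    · exact h
    · exfalso
      have hμn : 0 ≤ μ := by
        rw [hμ]
        apply div_nonneg (Finset.sum_nonneg fun k _ => norm_nonneg _) hsd.le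
      have : μ = 0 := le_antisymm h hμn
      rw [this] at h1; simp at h1
  have hTpos : (0:ℝ) < T.card := by
    by_contra hcon
    push_neg at hcon
    have : (T.card : ℝ) = 0 := le_antisymm hcon (Nat.cast_nonneg _)
    rw [this, zero_mul] at h1; norm_num at h1
  have hrel1 : ν = T.card * μ / Real.sqrt d := by rw [hν, hsum_c1]
  have hrel2 : μ = Ω.card * ν / Real.sqrt d := by rw [hμ, hsum_F1]
  have hdd : Real.sqrt d * Real.sqrt d = d := Real.mul_self_sqrt hdpos.le
  have hkey : (T.card : ℝ) * Ω.card = d := by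
    have e1 : ν * Real.sqrt d = T.card * μ := by
      rw [hrel1, div_mul_cancel₀ _ hsd.ne']
    have e2 : μ * Real.sqrt d = Ω.card * ν := by
      rw [hrel2, div_mul_cancel₀ _ hsd.ne']
    have e3 : μ * (d:ℝ) = μ * ((Ω.card:ℝ) * (T.card:ℝ)) := by
      calc μ * (d:ℝ) = μ * Real.sqrt d * Real.sqrt d := by rw [mul_assoc, hdd]
        _ = (Ω.card:ℝ) * ν * Real.sqrt d := by rw [e2]
        _ = (Ω.card:ℝ) * (ν * Real.sqrt d) := by ring
        _ = (Ω.card:ℝ) * ((T.card:ℝ) * μ) := by rw [e1]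
        _ = μ * ((Ω.card:ℝ) * (T.card:ℝ)) := by ring
    have h5 := mul_left_cancel₀ hμ0.ne' e3
    rw [h5]; ring
  have : ((suppCard d c * suppCard d (dft d c) : ℕ) : ℝ) = (d:ℝ) := by
    rw [suppCard, suppCard]
    push_cast
    exact hkey
  exact_mod_cast this
end

section
/- The twirl operation T(ρ) = d^{-2} Σ_{g∈G} g* ρ g, where G = {U_{k,l} ⊗ U_{k,-l}}, maps every density operator ρ on ℂ^d ⊗ ℂ^d to a state that is diagonal in the basis {|Ψ_{kl}⟩}, with diagonal entries ⟨Ψ_{kl}|ρ|Ψ_{kl}⟩. -/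
open scoped BigOperators Classical ComplexOrder

/-- The unitaries `U_{kl} = Σ_r η^{rl} |k+r⟩⟨r|` (index addition mod `d`). -/
noncomputable def Umat (d : ℕ) [NeZero d] (k l : Fin d) : Matrix (Fin d) (Fin d) ℂ :=
  fun i r => if i = k + r then eta d ^ ((r : ℕ) * (l : ℕ)) else 0

/-- The maximally entangled vectors `Ψ_{kl} = (1/√d) Σ_j |j⟩ ⊗ U_{kl}|j⟩`,
as functions on `Fin d × Fin d` (component at `(a,b)` is `(1/√d)·(U_{kl})_{b a}`). -/
noncomputable def Psi (d : ℕ) [NeZero d] (k l : Fin d) : Fin d × Fin d → ℂ :=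
  fun p => (1 / (Real.sqrt d : ℂ)) * Umat d k l p.2 p.1

/-- Rank-one projector `|v⟩⟨v|`. -/
noncomputable def outer {ι : Type*} (v : ι → ℂ) : Matrix ι ι ℂ :=
  fun i j => v i * (starRingEnd ℂ) (v j)

/-- The symmetry group element `U_{k,l} ⊗ U_{k,-l}` on `ℂ^d ⊗ ℂ^d`. -/
noncomputable def Gmat (d : ℕ) [NeZero d] (k l : Fin d) :
    Matrix (Fin d × Fin d) (Fin d × Fin d) ℂ :=
  fun p q => Umat d k l p.1 q.1 * Umat d k (-l) p.2 q.2

/-- The twirl `T(ρ) = d⁻² Σ_{g∈G} g* ρ g`. -/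
noncomputable def twirl (d : ℕ) [NeZero d]
    (ρ : Matrix (Fin d × Fin d) (Fin d × Fin d) ℂ) :
    Matrix (Fin d × Fin d) (Fin d × Fin d) ℂ :=
  (((d : ℂ)) ^ 2)⁻¹ • ∑ k, ∑ l, (Gmat d k l).conjTranspose * ρ * Gmat d k l

/-- Expectation value `⟨v|ρ|v⟩`. -/
noncomputable def expec {ι : Type*} [Fintype ι] (v : ι → ℂ)
    (ρ : Matrix ι ι ℂ) : ℂ :=
  ∑ p, ∑ q, (starRingEnd ℂ) (v p) * ρ p q * v q

lemma eta_prim (d : ℕ) [NeZero d] : IsPrimitiveRoot (eta d) d :=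
  Complex.isPrimitiveRoot_exp d (NeZero.ne d)

lemma eta_pow_d (d : ℕ) [NeZero d] : eta d ^ d = 1 := (eta_prim d).pow_eq_one

lemma eta_pow_mod (d : ℕ) [NeZero d] (n : ℕ) : eta d ^ (n % d) = eta d ^ n := by
  conv_rhs => rw [← Nat.div_add_mod n d]
  rw [pow_add, pow_mul, eta_pow_d, one_pow, one_mul]

lemma eta_ne (d : ℕ) [NeZero d] : eta d ≠ 0 := Complex.exp_ne_zero _

lemma eta_val_add (d : ℕ) [NeZero d] (a b : Fin d) :
    eta d ^ ((a + b : Fin d) : ℕ) = eta d ^ (a : ℕ) * eta d ^ (b : ℕ) := by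
  rw [Fin.val_add, eta_pow_mod, pow_add]

lemma eta_val_neg (d : ℕ) [NeZero d] (l : Fin d) :
    eta d ^ ((-l : Fin d) : ℕ) = (eta d ^ (l : ℕ))⁻¹ := by
  have h : eta d ^ ((-l : Fin d) : ℕ) * eta d ^ (l : ℕ) = 1 := by
    rw [← eta_val_add, neg_add_cancel, Fin.val_zero, pow_zero]
  exact eq_inv_of_mul_eq_one_left h

lemma char_sum (d : ℕ) [NeZero d] (x : ℂ) (hx : x ^ d = 1) :
    ∑ l : Fin d, x ^ (l : ℕ) = if x = 1 then (d : ℂ) else 0 := by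
  split_ifs with h
  · simp [h]
  · rw [Fin.sum_univ_eq_sum_range, geom_sum_eq h, hx, sub_self, zero_div]

lemma eta_star (d : ℕ) [NeZero d] (n : ℕ) :
    star (eta d ^ n) = (eta d ^ n)⁻¹ := by
  rw [star_pow, ← inv_pow]
  congr 1
  show (starRingEnd ℂ) (eta d) = (eta d)⁻¹
  rw [eta, ← Complex.exp_conj, ← Complex.exp_neg]
  congr 1
  simp [map_div₀, map_ofNat]
  ring

lemma eta_star1 (d : ℕ) [NeZero d] : star (eta d) = (eta d)⁻¹ := by
  have := eta_star d 1; simpa using this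

lemma eta_pow_ne (d : ℕ) [NeZero d] (n : ℕ) : eta d ^ n ≠ 0 := pow_ne_zero _ (eta_ne d)

lemma coeff_eq (d : ℕ) [NeZero d] (a b c e : ℕ) (i : Fin d) :
    star (eta d ^ (a * (i : ℕ))) * star (eta d ^ (b * ((-i : Fin d) : ℕ))) *
      (eta d ^ (c * (i : ℕ)) * eta d ^ (e * ((-i : Fin d) : ℕ))) =
    (eta d ^ (c + b) * (eta d ^ (a + e))⁻¹) ^ (i : ℕ) := by
  rw [pow_mul', pow_mul', pow_mul', pow_mul', eta_val_neg]
  simp only [star_pow, star_inv₀, eta_star1, inv_inv]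
  have h := eta_ne d
  simp only [one_div, inv_pow, inv_inv]
  ring

lemma coeff_eq2 (d : ℕ) [NeZero d] (a b c e : ℕ) (i : Fin d) :
    star (eta d ^ (a * (i : ℕ))) * star (eta d ^ (b * (i : ℕ))) *
      (eta d ^ (c * (i : ℕ)) * eta d ^ (e * (i : ℕ))) =
    (eta d ^ (c + e) * (eta d ^ (a + b))⁻¹) ^ (i : ℕ) := by
  rw [pow_mul', pow_mul', pow_mul', pow_mul']
  simp only [star_pow, star_inv₀, eta_star1, inv_inv]
  have h := eta_ne d
  field_simp
  ring

lemma base_pow_d (d : ℕ) [NeZero d] (m n : ℕ) :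
    (eta d ^ m * (eta d ^ n)⁻¹) ^ d = 1 := by
  rw [mul_pow, inv_pow, ← pow_mul, ← pow_mul, mul_comm m d, mul_comm n d, pow_mul, pow_mul,
    eta_pow_d, one_pow, one_pow, inv_one, mul_one]

lemma eta_val_inj (d : ℕ) [NeZero d] (a b : Fin d) :
    eta d ^ (a : ℕ) = eta d ^ (b : ℕ) ↔ a = b :=
  ⟨fun h => Fin.ext ((eta_prim d).pow_inj a.isLt b.isLt h), fun h => by rw [h]⟩

lemma base_eq_one_iff (d : ℕ) [NeZero d] (a b c e : Fin d) :
    (eta d ^ ((a : ℕ) + (b : ℕ)) * (eta d ^ ((c : ℕ) + (e : ℕ)))⁻¹) = 1 ↔ a + b = c + e := by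
  rw [mul_inv_eq_one₀ (eta_pow_ne d _), pow_add, pow_add, ← eta_val_add, ← eta_val_add,
    eta_val_inj]

lemma char_sum' (d : ℕ) [NeZero d] (m n : ℕ) :
    ∑ l : Fin d, (eta d ^ m * (eta d ^ n)⁻¹) ^ (l : ℕ) =
      if eta d ^ m * (eta d ^ n)⁻¹ = 1 then (d : ℂ) else 0 :=
  char_sum d _ (base_pow_d d m n)

lemma lhs_entry (d : ℕ) [NeZero d] (ρ : Matrix (Fin d × Fin d) (Fin d × Fin d) ℂ)
    (p q : Fin d × Fin d) :
    twirl d ρ p q =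
      if q.1 + p.2 = p.1 + q.2 then
        (d : ℂ)⁻¹ * ∑ k, ρ (k + p.1, k + p.2) (k + q.1, k + q.2) else 0 := by
  have hd : (d : ℂ) ≠ 0 := Nat.cast_ne_zero.mpr (NeZero.ne d)
  simp only [twirl, Matrix.smul_apply, Matrix.sum_apply, Matrix.mul_apply,
    Matrix.conjTranspose_apply, Gmat, Umat, Fintype.sum_prod_type, mul_ite, ite_mul,
    zero_mul, mul_zero, map_mul, map_pow, map_zero, map_one, apply_ite (star : ℂ → ℂ),
    star_zero, star_mul', Finset.sum_ite_eq, Finset.sum_ite_eq', Finset.mem_univ, if_true,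
    smul_eq_mul, Finset.mul_sum, Finset.sum_mul]
  have step1 : ∀ x i : Fin d,
      (((d : ℂ)) ^ 2)⁻¹ *
        (star (eta d ^ ((p.1 : ℕ) * (i : ℕ))) * star (eta d ^ ((p.2 : ℕ) * ((-i : Fin d) : ℕ))) *
          ρ (x + p.1, x + p.2) (x + q.1, x + q.2) *
          (eta d ^ ((q.1 : ℕ) * (i : ℕ)) * eta d ^ ((q.2 : ℕ) * ((-i : Fin d) : ℕ)))) =
      ((d : ℂ) ^ 2)⁻¹ * ρ (x + p.1, x + p.2) (x + q.1, x + q.2) *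
        ((eta d ^ ((q.1 : ℕ) + (p.2 : ℕ)) * (eta d ^ ((p.1 : ℕ) + (q.2 : ℕ)))⁻¹) ^ (i : ℕ)) := by
    intro x i
    rw [← coeff_eq d (p.1 : ℕ) (p.2 : ℕ) (q.1 : ℕ) (q.2 : ℕ) i]
    ring
  simp only [step1]
  have step2 : ∀ x : Fin d,
      ∑ i : Fin d, ((d : ℂ) ^ 2)⁻¹ * ρ (x + p.1, x + p.2) (x + q.1, x + q.2) *
        ((eta d ^ ((q.1 : ℕ) + (p.2 : ℕ)) * (eta d ^ ((p.1 : ℕ) + (q.2 : ℕ)))⁻¹) ^ (i : ℕ)) =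
      ((d : ℂ) ^ 2)⁻¹ * ρ (x + p.1, x + p.2) (x + q.1, x + q.2) *
        (if q.1 + p.2 = p.1 + q.2 then (d : ℂ) else 0) := by
    intro x
    rw [← Finset.mul_sum, char_sum' d]
    simp only [base_eq_one_iff]
  simp only [step2]
  by_cases h : q.1 + p.2 = p.1 + q.2
  · simp only [h, if_true, Finset.mul_sum]
    apply Finset.sum_congr rfl
    intro x _
    field_simp
  · simp [h]

lemma etastar_pow (d : ℕ) [NeZero d] (n : ℕ) :
    (starRingEnd ℂ) (eta d) ^ n = star (eta d ^ n) := by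
  rw [star_pow]; rfl

lemma rhs_entry (d : ℕ) [NeZero d] (ρ : Matrix (Fin d × Fin d) (Fin d × Fin d) ℂ)
    (p q : Fin d × Fin d) :
    (∑ k, ∑ l, expec (Psi d k l) ρ • outer (Psi d k l)) p q =
      if q.1 + p.2 = p.1 + q.2 then
        (d : ℂ)⁻¹ * ∑ a : Fin d,
          ρ (a, (p.2 - p.1) + a) (a + q.1 - p.1, (p.2 - p.1) + (a + q.1 - p.1)) else 0 := by
  have hd : (d : ℂ) ≠ 0 := Nat.cast_ne_zero.mpr (NeZero.ne d)
  have hs : ((Real.sqrt d : ℝ) : ℂ) * ((Real.sqrt d : ℝ) : ℂ) = (d : ℂ) := by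
    rw [← Complex.ofReal_mul, Real.mul_self_sqrt (Nat.cast_nonneg d)]
    norm_cast
  simp only [Matrix.sum_apply, Matrix.smul_apply, expec, outer, Psi, Umat,
    Fintype.sum_prod_type, mul_ite, ite_mul, zero_mul, mul_zero, map_mul, map_pow,
    map_zero, map_one, map_div₀, Complex.conj_ofReal, smul_eq_mul, apply_ite (starRingEnd ℂ),
    Finset.sum_ite_eq, Finset.sum_ite_eq', Finset.mem_univ, if_true, Finset.sum_ite_irrel,
    Finset.sum_const_zero, Finset.mul_sum, Finset.sum_mul]
  have h1 : ∀ x : Fin d, (q.2 = x + q.1) = (q.2 - q.1 = x) :=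
    fun x => propext (Iff.symm sub_eq_iff_eq_add)
  have h2 : ∀ x : Fin d, (p.2 = x + p.1) = (p.2 - p.1 = x) :=
    fun x => propext (Iff.symm sub_eq_iff_eq_add)
  simp only [h1, h2, Finset.sum_ite_eq, Finset.mem_univ, if_true]
  have hcond : (p.2 - p.1 = q.2 - q.1) = (q.1 + p.2 = p.1 + q.2) := by
    apply propext
    rw [sub_eq_sub_iff_add_eq_add]
    constructor
    · intro h; rw [add_comm q.1 p.2, add_comm p.1 q.2]; exact h
    · intro h; rw [add_comm p.2 q.1, add_comm q.2 p.1]; exact h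
  simp only [hcond]
  by_cases h : q.1 + p.2 = p.1 + q.2
  · simp only [h, if_true]
    have hx : q.2 - q.1 = p.2 - p.1 := by
      rw [sub_eq_sub_iff_add_eq_add, add_comm q.2 p.1, add_comm p.2 q.1]; exact h.symm
    rw [hx]
    set x := p.2 - p.1 with hxdef
    -- reorganize per-term
    have step1 : ∀ l a b : Fin d,
        1 / (Real.sqrt d : ℂ) * (starRingEnd ℂ) (eta d) ^ ((a : ℕ) * (l : ℕ)) *
            ρ (a, x + a) (b, x + b) * (1 / (Real.sqrt d : ℂ) * eta d ^ ((b : ℕ) * (l : ℕ))) *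
            (1 / (Real.sqrt d : ℂ) * eta d ^ ((p.1 : ℕ) * (l : ℕ)) *
              (1 / (Real.sqrt d : ℂ) * (starRingEnd ℂ) (eta d) ^ ((q.1 : ℕ) * (l : ℕ)))) =
        (1 / (Real.sqrt d : ℂ))^4 * ρ (a, x + a) (b, x + b) *
          ((eta d ^ ((b : ℕ) + (p.1 : ℕ)) * (eta d ^ ((a : ℕ) + (q.1 : ℕ)))⁻¹) ^ (l : ℕ)) := by
      intro l a b
      rw [etastar_pow, etastar_pow, ← coeff_eq2 d (a : ℕ) (q.1 : ℕ) (b : ℕ) (p.1 : ℕ) l]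
      ring
    simp only [step1]
    rw [Finset.sum_comm]
    have step2 : ∀ a : Fin d,
        ∑ l : Fin d, ∑ b : Fin d, (1 / (Real.sqrt d : ℂ))^4 * ρ (a, x + a) (b, x + b) *
          ((eta d ^ ((b : ℕ) + (p.1 : ℕ)) * (eta d ^ ((a : ℕ) + (q.1 : ℕ)))⁻¹) ^ (l : ℕ)) =
        (d : ℂ)⁻¹ * ρ (a, x + a) (a + q.1 - p.1, x + (a + q.1 - p.1)) := by
      intro a
      rw [Finset.sum_comm]
      have step3 : ∀ b : Fin d,
          ∑ l : Fin d, (1 / (Real.sqrt d : ℂ))^4 * ρ (a, x + a) (b, x + b) *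
            ((eta d ^ ((b : ℕ) + (p.1 : ℕ)) * (eta d ^ ((a : ℕ) + (q.1 : ℕ)))⁻¹) ^ (l : ℕ)) =
          if a + q.1 - p.1 = b then
            (1 / (Real.sqrt d : ℂ))^4 * ρ (a, x + a) (b, x + b) * (d : ℂ) else 0 := by
        intro b
        rw [← Finset.mul_sum, char_sum' d]
        simp only [base_eq_one_iff]
        have : (b + p.1 = a + q.1) = (a + q.1 - p.1 = b) := by
          apply propext
          rw [sub_eq_iff_eq_add, eq_comm]
        simp only [mul_ite, mul_zero, this]
      simp only [step3, Finset.sum_ite_eq, Finset.mem_univ, if_true]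
      have : (1 / (Real.sqrt d : ℂ))^4 * (d : ℂ) = (d : ℂ)⁻¹ := by
        have h2 : ((Real.sqrt d : ℝ) : ℂ) ^ 2 = (d : ℂ) := by rw [sq, hs]
        rw [div_pow, one_pow, show (4 : ℕ) = 2 * 2 from rfl, pow_mul, h2, one_div, sq,
          mul_inv, mul_assoc, inv_mul_cancel₀ hd, mul_one]
      rw [show (1 / (Real.sqrt d : ℂ))^4 * ρ (a, x + a) (a + q.1 - p.1, x + (a + q.1 - p.1)) * (d : ℂ) = ((1 / (Real.sqrt d : ℂ))^4 * (d : ℂ)) * ρ (a, x + a) (a + q.1 - p.1, x + (a + q.1 - p.1)) by ring, this]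
    simp only [step2]
  · simp only [h, if_false]

theorem twirl_diagonalizes (d : ℕ) [NeZero d]
    (ρ : Matrix (Fin d × Fin d) (Fin d × Fin d) ℂ)
    (hρ : ρ.PosSemidef) (htr : ρ.trace = 1) :
    twirl d ρ = ∑ k, ∑ l, expec (Psi d k l) ρ • outer (Psi d k l) := by
  ext p q
  rw [lhs_entry, rhs_entry]
  by_cases h : q.1 + p.2 = p.1 + q.2
  · simp only [h, if_true]
    congr 1
    have hq2 : q.2 = q.1 + p.2 - p.1 := by rw [h]; abel
    apply Fintype.sum_equiv (Equiv.addRight p.1)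
    intro k
    simp only [Equiv.coe_addRight]
    rw [hq2]
    congr 1 <;> rw [Prod.mk.injEq] <;> constructor <;> abel
  · simp only [h, if_false]
end

section
/- Any map of the form M(X) = Σ_j σ_j tr(F_j X), where {F_j} is a POVM and {σ_j} are density operators, is entanglement breaking: for every bipartite density operator ρ on H ⊗ ℂ^d, the state (id ⊗ M)(ρ) is separable. -/
open scoped BigOperators Classical ComplexOrder

/-- Elementary tensor (Kronecker product) of matrices, indexed by pairs. -/
noncomputable def prodMat {n m : ℕ} (A : Matrix (Fin n) (Fin n) ℂ)
    (B : Matrix (Fin m) (Fin m) ℂ) : Matrix (Fin n × Fin m) (Fin n × Fin m) ℂ :=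
  fun p q => A p.1 q.1 * B p.2 q.2

/-- Separability: convex combination of product density operators. -/
def Separable {n m : ℕ} (σ : Matrix (Fin n × Fin m) (Fin n × Fin m) ℂ) : Prop :=
  ∃ (N : ℕ) (p : Fin N → ℝ) (A : Fin N → Matrix (Fin n) (Fin n) ℂ)
    (B : Fin N → Matrix (Fin m) (Fin m) ℂ),
    (∀ i, 0 ≤ p i) ∧ (∑ i, p i = 1) ∧
    (∀ i, (A i).PosSemidef ∧ (A i).trace = 1) ∧
    (∀ i, (B i).PosSemidef ∧ (B i).trace = 1) ∧
    σ = ∑ i, ((p i : ℝ) : ℂ) • prodMat (A i) (B i)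

section sqrthelper

open scoped MatrixOrder

lemma psd_exists_conjTranspose_mul_self {k : ℕ} {A : Matrix (Fin k) (Fin k) ℂ}
    (hA : A.PosSemidef) : ∃ B : Matrix (Fin k) (Fin k) ℂ, A = B.conjTranspose * B := by
  classical
  have hA0 : 0 ≤ A := Matrix.nonneg_iff_posSemidef.mpr hA
  obtain ⟨X, hX, -, hXA⟩ :=
    CFC.exists_sqrt_of_isSelfAdjoint_of_quasispectrumRestricts hA0.isSelfAdjoint
      (QuasispectrumRestricts.nnreal_of_nonneg hA0)
  exact ⟨X, by subst hXA; rw [← Matrix.star_eq_conjTranspose, hX.star_eq]⟩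

end sqrthelper

section helpers

lemma psd_diag_nonneg {k : ℕ} {M : Matrix (Fin k) (Fin k) ℂ} (hM : M.PosSemidef) (a : Fin k) :
    0 ≤ M a a := by
  have h := hM.dotProduct_mulVec_nonneg (Pi.single a 1)
  simpa [dotProduct, Matrix.mulVec, Pi.single_apply, Finset.sum_ite_eq,
    mul_ite, ite_mul, apply_ite (starRingEnd ℂ)] using h

lemma psd_smul_real {k : ℕ} {M : Matrix (Fin k) (Fin k) ℂ} (hM : M.PosSemidef)
    {c : ℝ} (hc : 0 ≤ c) : ((c : ℂ) • M).PosSemidef := by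
  constructor
  · rw [Matrix.IsHermitian, Matrix.conjTranspose_smul, hM.1.eq]
    norm_num
  · intro x
    exact (hM.smul (Complex.zero_le_real.mpr hc)).2 x

lemma psd_trace_zero_eq_zero {k : ℕ} {M : Matrix (Fin k) (Fin k) ℂ} (hM : M.PosSemidef)
    (h : M.trace = 0) : M = 0 := by
  obtain ⟨B, rfl⟩ := psd_exists_conjTranspose_mul_self hM
  rw [Matrix.conjTranspose_mul_self_eq_zero]
  have h2 : ((∑ i, ∑ j, Complex.normSq (B j i) : ℝ) : ℂ) = 0 := by
    rw [← h]
    push_cast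
    simp only [Matrix.trace, Matrix.diag_apply, Matrix.mul_apply, Matrix.conjTranspose_apply]
    refine Finset.sum_congr rfl fun i _ => Finset.sum_congr rfl fun j _ => ?_
    rw [← Complex.mul_conj (B j i), mul_comm]
    rfl
  rw [Complex.ofReal_eq_zero] at h2
  have h3 := (Finset.sum_eq_zero_iff_of_nonneg (fun i _ =>
    Finset.sum_nonneg fun j _ => Complex.normSq_nonneg (B j i))).mp h2
  ext i j
  have h4 := (Finset.sum_eq_zero_iff_of_nonneg (fun t _ =>
    Complex.normSq_nonneg (B t j))).mp (h3 j (Finset.mem_univ j)) i (Finset.mem_univ i)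
  simpa using Complex.normSq_eq_zero.mp h4

end helpers

theorem entanglement_breaking_of_measure_prepare
    (d d₂ m n : ℕ)
    (F : Fin m → Matrix (Fin d) (Fin d) ℂ)
    (hF : ∀ j, (F j).PosSemidef) (hFsum : ∑ j, F j = 1)
    (σ : Fin m → Matrix (Fin d₂) (Fin d₂) ℂ)
    (hσ : ∀ j, (σ j).PosSemidef ∧ (σ j).trace = 1)
    (ρ : Matrix (Fin n × Fin d) (Fin n × Fin d) ℂ)
    (hρ : ρ.PosSemidef) (htr : ρ.trace = 1) :
    Separable (fun (p q : Fin n × Fin d₂) =>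
      ∑ j, (∑ r, ∑ s, F j s r * ρ (p.1, r) (q.1, s)) * σ j p.2 q.2) := by
  classical
  rcases Nat.eq_zero_or_pos n with hn | hn
  · subst hn; simp [Matrix.trace] at htr
  rcases Nat.eq_zero_or_pos d with hd | hd
  · subst hd; simp [Matrix.trace] at htr
  rcases Nat.eq_zero_or_pos m with hm | hm
  · subst hm
    have h0 := congrFun (congrFun hFsum ⟨0, hd⟩) ⟨0, hd⟩
    simp [Matrix.one_apply] at h0
  rcases Nat.eq_zero_or_pos d₂ with hd2 | hd2
  · subst hd2
    have h0 := (hσ ⟨0, hm⟩).2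
    simp [Matrix.trace] at h0
  -- main construction
  set X : Fin m → Matrix (Fin n) (Fin n) ℂ :=
    fun j => Matrix.of (fun a b => ∑ r, ∑ s, F j s r * ρ (a, r) (b, s)) with hXdef
  choose C hC using fun j => psd_exists_conjTranspose_mul_self (hF j)
  set K : Fin m → Fin d → Matrix (Fin n × Fin d) (Fin n) ℂ :=
    fun j t => Matrix.of (fun p a => if p.1 = a then (starRingEnd ℂ) (C j t p.2) else 0) with hKdef
  have hXrep : ∀ j, X j = ∑ t, (K j t).conjTranspose * ρ * (K j t) := by
    intro j
    ext a b
    have hR : (∑ t, (K j t).conjTranspose * ρ * (K j t)) a b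
        = ∑ t, ∑ r, ∑ s, C j t r * (ρ (a, r) (b, s) * (starRingEnd ℂ) (C j t s)) := by
      simp only [Matrix.sum_apply, Matrix.mul_apply, Matrix.conjTranspose_apply, hKdef,
        Matrix.of_apply, Fintype.sum_prod_type, Finset.sum_mul, Finset.mul_sum]
      refine Finset.sum_congr rfl fun t _ => ?_
      simp [Finset.sum_ite_eq, Finset.sum_ite_eq', mul_ite, ite_mul,
        apply_ite (starRingEnd ℂ), Finset.mul_sum, RCLike.star_def]
      rw [Finset.sum_comm]
      exact Finset.sum_congr rfl fun r _ => Finset.sum_congr rfl fun s _ => by ring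
    rw [hR]
    have hF' : ∀ s r, F j s r = ∑ t, (starRingEnd ℂ) (C j t s) * C j t r := by
      intro s r
      rw [hC j]
      simp [Matrix.mul_apply, Matrix.conjTranspose_apply, RCLike.star_def]
    show (∑ r, ∑ s, F j s r * ρ (a, r) (b, s)) = _
    calc (∑ r, ∑ s, F j s r * ρ (a, r) (b, s))
        = ∑ r, ∑ s, ∑ t, C j t r * (ρ (a,r) (b,s) * (starRingEnd ℂ) (C j t s)) := by
          refine Finset.sum_congr rfl fun r _ => Finset.sum_congr rfl fun s _ => ?_
          rw [hF', Finset.sum_mul]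
          exact Finset.sum_congr rfl fun t _ => by ring
      _ = ∑ r, ∑ t, ∑ s, C j t r * (ρ (a,r) (b,s) * (starRingEnd ℂ) (C j t s)) :=
          Finset.sum_congr rfl fun r _ => Finset.sum_comm
      _ = ∑ t, ∑ r, ∑ s, C j t r * (ρ (a,r) (b,s) * (starRingEnd ℂ) (C j t s)) :=
          Finset.sum_comm
  have hXpsd : ∀ j, (X j).PosSemidef := by
    intro j
    rw [hXrep j]
    -- sum of PSD matrices
    have : ∀ t : Fin d, ((K j t).conjTranspose * ρ * (K j t)).PosSemidef :=
      fun t => hρ.conjTranspose_mul_mul_same (K j t)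
    exact Finset.sum_induction _ _ (fun A B hA hB => hA.add hB) Matrix.PosSemidef.zero
      (fun t _ => this t)
  have hXtr_nonneg : ∀ j, 0 ≤ (X j).trace := fun j =>
    Finset.sum_nonneg fun a _ => psd_diag_nonneg (hXpsd j) a
  have hXtr_sum : ∑ j, (X j).trace = 1 := by
    rw [← htr]
    simp only [Matrix.trace, Matrix.diag_apply, hXdef, Matrix.of_apply, Fintype.sum_prod_type]
    rw [Finset.sum_comm]
    refine Finset.sum_congr rfl fun a _ => ?_
    calc ∑ j, ∑ r, ∑ s, F j s r * ρ (a, r) (a, s)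
        = ∑ r, ∑ s, (∑ j, F j) s r * ρ (a, r) (a, s) := by
          rw [Finset.sum_comm]
          refine Finset.sum_congr rfl fun r _ => ?_
          rw [Finset.sum_comm]
          refine Finset.sum_congr rfl fun s _ => ?_
          rw [Matrix.sum_apply, Finset.sum_mul]
      _ = ∑ r, ρ (a, r) (a, r) := by
          rw [hFsum]
          refine Finset.sum_congr rfl fun r _ => ?_
          simp [Matrix.one_apply, ite_mul]
  -- real coefficients
  set p : Fin m → ℝ := fun j => ((X j).trace).re with hpdef
  have hpc : ∀ j, ((p j : ℝ) : ℂ) = (X j).trace := by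
    intro j
    have := hXtr_nonneg j
    rw [Complex.nonneg_iff] at this
    exact Complex.ext rfl (by simp [hpdef, ← this.2])
  have hpnn : ∀ j, 0 ≤ p j := fun j => (Complex.nonneg_iff.mp (hXtr_nonneg j)).1
  set A : Fin m → Matrix (Fin n) (Fin n) ℂ :=
    fun j => if (X j).trace = 0 then (((n : ℝ)⁻¹ : ℝ) : ℂ) • (1 : Matrix (Fin n) (Fin n) ℂ)
      else (((p j)⁻¹ : ℝ) : ℂ) • X j with hAdef
  refine ⟨m, p, A, σ, hpnn, ?_, ?_, fun j => hσ j, ?_⟩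
  · have : ((∑ j, p j : ℝ) : ℂ) = 1 := by
      push_cast
      rw [Finset.sum_congr rfl fun j _ => hpc j, hXtr_sum]
    exact_mod_cast this
  · intro j
    by_cases h0 : (X j).trace = 0
    · constructor
      · simp only [hAdef, if_pos h0]
        exact psd_smul_real Matrix.PosSemidef.one (by positivity)
      · simp only [hAdef, if_pos h0, Matrix.trace_smul, Matrix.trace_one, smul_eq_mul]
        simp
        rw [inv_mul_cancel₀]
        exact_mod_cast hn.ne'
    · constructor
      · simp only [hAdef, if_neg h0]
        exact psd_smul_real (hXpsd j) (inv_nonneg.mpr (hpnn j))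
      · simp only [hAdef, if_neg h0, Matrix.trace_smul, smul_eq_mul]
        have hp0 : (p j : ℂ) ≠ 0 := by rw [hpc j]; exact h0
        push_cast
        rw [← hpc j, inv_mul_cancel₀ hp0]
  · funext q1 q2
    show ∑ j, (∑ r, ∑ s, F j s r * ρ (q1.1, r) (q2.1, s)) * σ j q1.2 q2.2 = _
    rw [Matrix.sum_apply]  -- maybe needs adjusting
    refine Finset.sum_congr rfl fun j _ => ?_
    have hXapp : (∑ r, ∑ s, F j s r * ρ (q1.1, r) (q2.1, s)) = X j q1.1 q2.1 := rfl
    rw [hXapp]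
    simp only [Matrix.smul_apply, prodMat, smul_eq_mul]
    by_cases h0 : (X j).trace = 0
    · have hX0 : X j = 0 := psd_trace_zero_eq_zero (hXpsd j) h0
      have hp0 : p j = 0 := by
        have := hpc j; rw [h0] at this; exact_mod_cast this
      rw [hX0, hp0]
      simp
    · simp only [hAdef, if_neg h0, Matrix.smul_apply, smul_eq_mul]
      have hp0 : (p j : ℂ) ≠ 0 := by rw [hpc j]; exact h0
      field_simp
      push_cast
      rw [mul_assoc, mul_one_div_cancel hp0, mul_one]
end
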